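/- arXiv:2107.14075 — 14 statements merged into one kernel-verified Lean document; each statement's English description precedes it below -/
import Mathlib

section
/- Let 𝓕 be an ω-closed family of subsets of ℕ. Then the binary operation · on ℤ × ℤ × 𝓕 is well defined (the third component of any product again belongs to 𝓕) and associative; hence S(𝓕) is a semigroup. -/
/-- `zshift n F = {n + k : k ∈ F}`. -/
def zshift (n : ℤ) (F : Set ℤ) : Set ℤ := {m : ℤ | ∃ k ∈ F, m = n + k}

/-- A family of subsets of `ℕ` (viewed as subsets of `ℤ`) is `ω`-closed if it consists of
sets of nonnegative integers and `F₁ ∩ (-n + F₂)` belongs to the family for all `n : ℕ`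
and all members `F₁, F₂` of the family. -/
def OmegaClosed (𝓕 : Set (Set ℤ)) : Prop :=
  (∀ F ∈ 𝓕, ∀ x ∈ F, 0 ≤ x) ∧
    ∀ n : ℕ, ∀ F₁ ∈ 𝓕, ∀ F₂ ∈ 𝓕, F₁ ∩ zshift (-(n : ℤ)) F₂ ∈ 𝓕

/-- The binary operation on triples `(i, j, F)`:
`(i₁,j₁,F₁)·(i₂,j₂,F₂) = (i₁−j₁+i₂, j₂, (j₁−i₂+F₁) ∩ F₂)` if `j₁ < i₂`;
`(i₁, j₂, F₁ ∩ F₂)` if `j₁ = i₂`; `(i₁, j₁−i₂+j₂, F₁ ∩ (i₂−j₁+F₂))` if `j₁ > i₂`. -/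
def smul3 (x y : ℤ × ℤ × Set ℤ) : ℤ × ℤ × Set ℤ :=
  if x.2.1 < y.1 then
    (x.1 - x.2.1 + y.1, y.2.1, zshift (x.2.1 - y.1) x.2.2 ∩ y.2.2)
  else if x.2.1 = y.1 then
    (x.1, y.2.1, x.2.2 ∩ y.2.2)
  else
    (x.1, x.2.1 - y.1 + y.2.1, x.2.2 ∩ zshift (y.1 - x.2.1) y.2.2)

/-- The carrier of the semigroup `S(𝓕)`: all triples whose third component lies in `𝓕`. -/
def Scar (𝓕 : Set (Set ℤ)) : Set (ℤ × ℤ × Set ℤ) := {x | x.2.2 ∈ 𝓕}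

lemma zshift_zero (F : Set ℤ) : zshift 0 F = F := by
  ext m; simp [zshift]

lemma zshift_add (a b : ℤ) (F : Set ℤ) : zshift a (zshift b F) = zshift (a + b) F := by
  ext m
  constructor
  · rintro ⟨k, ⟨l, hl, rfl⟩, rfl⟩; exact ⟨l, hl, by ring⟩
  · rintro ⟨k, hk, rfl⟩; exact ⟨b + k, ⟨k, hk, rfl⟩, by ring⟩

lemma zshift_inter (a : ℤ) (F G : Set ℤ) :
    zshift a (F ∩ G) = zshift a F ∩ zshift a G := by
  ext m
  constructor
  · rintro ⟨k, ⟨h1, h2⟩, rfl⟩; exact ⟨⟨k, h1, rfl⟩, ⟨k, h2, rfl⟩⟩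
  · rintro ⟨⟨k, h1, rfl⟩, ⟨l, h2, he⟩⟩
    have : k = l := by omega
    subst this
    exact ⟨k, ⟨h1, h2⟩, rfl⟩

lemma smul3_eq (x y : ℤ × ℤ × Set ℤ) :
    smul3 x y = (x.1 + max (y.1 - x.2.1) 0, y.2.1 + max (x.2.1 - y.1) 0,
      zshift (min (x.2.1 - y.1) 0) x.2.2 ∩ zshift (min (y.1 - x.2.1) 0) y.2.2) := by
  unfold smul3
  split_ifs with h1 h2
  · refine Prod.ext (by simp; omega) (Prod.ext (by simp; omega) ?_)
    simp only
    rw [show min (x.2.1 - y.1) 0 = x.2.1 - y.1 by omega,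
        show min (y.1 - x.2.1) 0 = 0 by omega, zshift_zero]
  · refine Prod.ext (by simp; omega) (Prod.ext (by simp; omega) ?_)
    simp only
    rw [show min (x.2.1 - y.1) 0 = 0 by omega,
        show min (y.1 - x.2.1) 0 = 0 by omega, zshift_zero, zshift_zero]
  · refine Prod.ext (by simp; omega) (Prod.ext (by simp; omega) ?_)
    simp only
    rw [show min (x.2.1 - y.1) 0 = 0 by omega,
        show min (y.1 - x.2.1) 0 = y.1 - x.2.1 by omega, zshift_zero]

/-- the operation is well defined on `S(𝓕)` (the third component of a product
again lies in `𝓕`) and associative, so `S(𝓕)` is a semigroup. -/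
theorem stmt0 (𝓕 : Set (Set ℤ)) (h : OmegaClosed 𝓕) :
    (∀ x ∈ Scar 𝓕, ∀ y ∈ Scar 𝓕, smul3 x y ∈ Scar 𝓕) ∧
    (∀ x ∈ Scar 𝓕, ∀ y ∈ Scar 𝓕, ∀ z ∈ Scar 𝓕,
      smul3 (smul3 x y) z = smul3 x (smul3 y z)) := by
  obtain ⟨-, hcl⟩ := h
  constructor
  · intro x hx y hy
    simp only [Scar, Set.mem_setOf_eq] at hx hy ⊢
    unfold smul3
    split_ifs with h1 h2
    · have := hcl (y.1 - x.2.1).toNat y.2.2 hy x.2.2 hx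
      rw [show -(((y.1 - x.2.1).toNat : ℤ)) = x.2.1 - y.1 by omega] at this
      simpa [Set.inter_comm] using this
    · have := hcl 0 x.2.2 hx y.2.2 hy
      simpa [zshift_zero] using this
    · have := hcl (x.2.1 - y.1).toNat x.2.2 hx y.2.2 hy
      rw [show -(((x.2.1 - y.1).toNat : ℤ)) = y.1 - x.2.1 by omega] at this
      exact this
  · intro x _ y _ z _
    rw [smul3_eq, smul3_eq, smul3_eq, smul3_eq]
    simp only
    refine Prod.ext (by simp; omega) (Prod.ext (by simp; omega) ?_)
    simp only [zshift_inter, zshift_add, Set.inter_assoc]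
    rw [show min (y.2.1 + max (x.2.1 - y.1) 0 - z.1) 0 + min (x.2.1 - y.1) 0
          = min (x.2.1 - (y.1 + max (z.1 - y.2.1) 0)) 0 by omega,
        show min (y.2.1 + max (x.2.1 - y.1) 0 - z.1) 0 + min (y.1 - x.2.1) 0
          = min (y.1 + max (z.1 - y.2.1) 0 - x.2.1) 0 + min (y.2.1 - z.1) 0 by omega,
        show min (z.1 - (y.2.1 + max (x.2.1 - y.1) 0)) 0
          = min (y.1 + max (z.1 - y.2.1) 0 - x.2.1) 0 + min (z.1 - y.2.1) 0 by omega]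
end

section
/- Let 𝓕 be an ω-closed family of subsets of ℕ. Any two idempotents of the semigroup S(𝓕) commute: if x·x = x and y·y = y in S(𝓕), then x·y = y·x. -/
lemma idem_eq (x : ℤ × ℤ × Set ℤ) (hxx : smul3 x x = x) : x.2.1 = x.1 := by
  by_contra hne
  rcases lt_or_gt_of_ne hne with hlt | hgt
  · have := congrArg Prod.fst hxx
    simp only [smul3, if_pos hlt] at this
    omega
  · have h1 : ¬ x.2.1 < x.1 := not_lt.mpr hgt.le
    have := congrArg (fun p : ℤ × ℤ × Set ℤ => p.2.1) hxx
    simp only [smul3, if_neg h1, if_neg hne] at this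
    omega

/-- idempotents of `S(𝓕)` commute. -/
theorem stmt2 (𝓕 : Set (Set ℤ)) (h : OmegaClosed 𝓕) (x y : ℤ × ℤ × Set ℤ)
    (hx : x ∈ Scar 𝓕) (hy : y ∈ Scar 𝓕)
    (hxx : smul3 x x = x) (hyy : smul3 y y = y) :
    smul3 x y = smul3 y x := by
  have hx' := idem_eq x hxx
  have hy' := idem_eq y hyy
  rcases lt_trichotomy x.2.1 y.1 with h1 | h1 | h1
  · have h2 : ¬ y.2.1 < x.1 := by omega
    have h3 : ¬ y.2.1 = x.1 := by omega
    simp only [smul3, if_pos h1, if_neg h2, if_neg h3]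
    refine Prod.ext (by omega) (Prod.ext (by simp; omega) ?_)
    have : x.2.1 - y.1 = x.1 - y.2.1 := by omega
    rw [this, Set.inter_comm]
  · have h2 : y.2.1 = x.1 := by omega
    have h4 : ¬ y.2.1 < x.1 := by omega
    have h5 : ¬ x.2.1 < y.1 := by omega
    simp only [smul3, if_neg h5, if_pos h1, if_neg h4, if_pos h2]
    exact Prod.ext (by omega) (Prod.ext (by simp; omega) (Set.inter_comm _ _))
  · have h2 : ¬ x.2.1 < y.1 := by omega
    have h3 : ¬ x.2.1 = y.1 := by omega
    have h4 : y.2.1 < x.1 := by omega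
    simp only [smul3, if_neg h2, if_neg h3, if_pos h4]
    refine Prod.ext (by omega) (Prod.ext (by simp; omega) ?_)
    have : y.1 - x.2.1 = y.2.1 - x.1 := by omega
    rw [this, Set.inter_comm]
end

section
/- Let 𝓕 be an ω-closed family of subsets of ℕ. Then S(𝓕) is an inverse semigroup: for every x ∈ S(𝓕) there exists a unique y ∈ S(𝓕) such that x·y·x = x and y·x·y = y; moreover, for x = (i,j,F) this unique inverse is y = (j,i,F). -/
lemma smul3_fst (x y : ℤ × ℤ × Set ℤ) :
    (smul3 x y).1 = x.1 + max x.2.1 y.1 - x.2.1 := by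
  unfold smul3; split_ifs <;> simp <;> omega

lemma smul3_snd (x y : ℤ × ℤ × Set ℤ) :
    (smul3 x y).2.1 = y.2.1 + max x.2.1 y.1 - y.1 := by
  unfold smul3; split_ifs <;> simp <;> omega

lemma mul_mul_eq (i j : ℤ) (F G : Set ℤ) :
    smul3 (smul3 (i, j, F) (j, i, G)) (i, j, F) = (i, j, F ∩ G ∩ F) := by
  simp [smul3]

lemma inv_props (i j : ℤ) (F : Set ℤ) :
    smul3 (smul3 (i, j, F) (j, i, F)) (i, j, F) = (i, j, F) ∧
      smul3 (smul3 (j, i, F) (i, j, F)) (j, i, F) = (j, i, F) := by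
  constructor <;> simp [smul3]

/-- `S(𝓕)` is an inverse semigroup: each `x ∈ S(𝓕)` has a unique inverse
`y ∈ S(𝓕)` with `x·y·x = x` and `y·x·y = y`; moreover the inverse of `(i,j,F)` is `(j,i,F)`. -/
theorem stmt4 (𝓕 : Set (Set ℤ)) (h : OmegaClosed 𝓕) :
    (∀ x ∈ Scar 𝓕, ∃! y : ℤ × ℤ × Set ℤ, y ∈ Scar 𝓕 ∧
      smul3 (smul3 x y) x = x ∧ smul3 (smul3 y x) y = y) ∧
    (∀ i j : ℤ, ∀ F ∈ 𝓕, ((j, i, F) : ℤ × ℤ × Set ℤ) ∈ Scar 𝓕 ∧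
      smul3 (smul3 (i, j, F) (j, i, F)) (i, j, F) = (i, j, F) ∧
      smul3 (smul3 (j, i, F) (i, j, F)) (j, i, F) = (j, i, F)) := by
  constructor
  · rintro ⟨i, j, F⟩ hx
    refine ⟨(j, i, F), ⟨hx, (inv_props i j F).1, (inv_props i j F).2⟩, ?_⟩
    rintro ⟨a, b, G⟩ ⟨hG, h1, h2⟩
    have e1 := congrArg Prod.fst h1
    have e2 := congrArg (fun p : ℤ × ℤ × Set ℤ => p.2.1) h1
    have e3 := congrArg Prod.fst h2
    have e4 := congrArg (fun p : ℤ × ℤ × Set ℤ => p.2.1) h2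
    simp only [smul3_fst, smul3_snd] at e1 e2 e3 e4
    have ha : a = j := by omega
    have hb : b = i := by omega
    subst ha hb
    rw [mul_mul_eq] at h1 h2
    have s1 : F ∩ G ∩ F = F := congrArg (fun p : ℤ × ℤ × Set ℤ => p.2.2) h1
    have s2 : G ∩ F ∩ G = G := congrArg (fun p : ℤ × ℤ × Set ℤ => p.2.2) h2
    have hGF : G = F := by
      apply Set.Subset.antisymm
      · intro x hxG
        have h' : x ∈ G ∩ F ∩ G := by rw [s2]; exact hxG
        exact h'.1.2
      · intro x hxF
        have h' : x ∈ F ∩ G ∩ F := by rw [s1]; exact hxF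
        exact h'.1.2
    rw [hGF]
  · intro i j F hF
    exact ⟨hF, (inv_props i j F).1, (inv_props i j F).2⟩
end

section
/- Let 𝓕 be an ω-closed family of subsets of ℕ and let (i₁,j₁,F₁), (i₂,j₂,F₂) ∈ S(𝓕) with F₁ and F₂ nonempty. Then there exists an idempotent e ∈ S(𝓕) with (i₁,j₁,F₁) = (i₂,j₂,F₂)·e (i.e. (i₁,j₁,F₁) ≼ (i₂,j₂,F₂) in the natural partial order of the inverse semigroup S(𝓕)) if and only if there exists k ∈ ℕ such that i₁ − i₂ = k, j₁ − j₂ = k, and F₁ ⊆ −k + F₂. -/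
/-- description of the natural partial order on `S(𝓕)` for elements with
nonempty third components. -/
theorem stmt5 (𝓕 : Set (Set ℤ)) (h : OmegaClosed 𝓕) (i₁ j₁ i₂ j₂ : ℤ) (F₁ F₂ : Set ℤ)
    (hF₁ : F₁ ∈ 𝓕) (hF₂ : F₂ ∈ 𝓕) (hne₁ : F₁.Nonempty) (hne₂ : F₂.Nonempty) :
    (∃ e ∈ Scar 𝓕, smul3 e e = e ∧ (i₁, j₁, F₁) = smul3 (i₂, j₂, F₂) e) ↔
      ∃ k : ℕ, i₁ - i₂ = (k : ℤ) ∧ j₁ - j₂ = (k : ℤ) ∧ F₁ ⊆ zshift (-(k : ℤ)) F₂ := by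
  constructor
  · rintro ⟨⟨a, b, E⟩, hE, hidem, heq⟩
    have hab : b = a := by
      rcases lt_trichotomy b a with hlt | heqab | hgt
      · simp only [smul3, hlt, if_pos, Prod.mk.injEq] at hidem
        omega
      · exact heqab
      · simp only [smul3, not_lt_of_gt hgt, ne_of_gt hgt, if_false,
          Prod.mk.injEq] at hidem
        omega
    subst hab
    rcases lt_trichotomy j₂ b with hlt | heqja | hgt
    · have hs : smul3 (i₂, j₂, F₂) (b, b, E)
          = (i₂ - j₂ + b, b, zshift (j₂ - b) F₂ ∩ E) := by
        simp [smul3, hlt]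
      rw [hs, Prod.mk.injEq, Prod.mk.injEq] at heq
      obtain ⟨h1, h2, h3⟩ := heq
      refine ⟨(b - j₂).toNat, by omega, by omega, ?_⟩
      have hk : (-(((b - j₂).toNat : ℤ))) = j₂ - b := by omega
      rw [hk, h3]
      exact Set.inter_subset_left
    · have hs : smul3 (i₂, j₂, F₂) (b, b, E) = (i₂, b, F₂ ∩ E) := by
        simp [smul3, heqja]
      rw [hs, Prod.mk.injEq, Prod.mk.injEq] at heq
      obtain ⟨h1, h2, h3⟩ := heq
      refine ⟨0, by omega, by omega, ?_⟩
      rw [show (-(0:ℕ) : ℤ) = 0 by norm_num, zshift_zero, h3]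
      exact Set.inter_subset_left
    · have hs : smul3 (i₂, j₂, F₂) (b, b, E)
          = (i₂, j₂ - b + b, F₂ ∩ zshift (b - j₂) E) := by
        simp [smul3, not_lt_of_gt hgt, ne_of_gt hgt]
      rw [hs, Prod.mk.injEq, Prod.mk.injEq] at heq
      obtain ⟨h1, h2, h3⟩ := heq
      refine ⟨0, by omega, by omega, ?_⟩
      rw [show (-(0:ℕ) : ℤ) = 0 by norm_num, zshift_zero, h3]
      exact Set.inter_subset_left
  · rintro ⟨k, h1, h2, h3⟩
    refine ⟨(j₁, j₁, F₁), hF₁, ?_, ?_⟩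
    · simp [smul3, Set.inter_self]
    · rcases Nat.eq_zero_or_pos k with hk | hk
      · subst hk
        rw [show (-(0:ℕ) : ℤ) = 0 by norm_num, zshift_zero] at h3
        have hji : j₂ = j₁ := by omega
        have hs : smul3 (i₂, j₂, F₂) (j₁, j₁, F₁) = (i₂, j₁, F₂ ∩ F₁) := by
          simp [smul3, hji]
        rw [hs, Prod.mk.injEq, Prod.mk.injEq]
        exact ⟨by omega, rfl, (Set.inter_eq_right.mpr h3).symm⟩
      · have hlt : j₂ < j₁ := by omega
        have hs : smul3 (i₂, j₂, F₂) (j₁, j₁, F₁)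
            = (i₂ - j₂ + j₁, j₁, zshift (j₂ - j₁) F₂ ∩ F₁) := by
          simp [smul3, hlt]
        rw [hs, Prod.mk.injEq, Prod.mk.injEq]
        refine ⟨by omega, rfl, ?_⟩
        have hk' : (-(k : ℤ)) = j₂ - j₁ := by omega
        rw [hk'] at h3
        exact (Set.inter_eq_right.mpr h3).symm
end

section
/- Let 𝓕 be an ω-closed family of subsets of ℕ and let x = (i₁,j₁,F₁), y = (i₂,j₂,F₂) ∈ S(𝓕). Then: (a) x and y generate the same principal right ideal of S(𝓕), i.e. {x} ∪ x·S(𝓕) = {y} ∪ y·S(𝓕), if and only if i₁ = i₂ and F₁ = F₂; (b) x and y generate the same principal left ideal of S(𝓕), i.e. {x} ∪ S(𝓕)·x = {y} ∪ S(𝓕)·y, if and only if j₁ = j₂ and F₁ = F₂. -/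
/-- The principal right ideal of `x` in `S(𝓕)`: `{x} ∪ x·S(𝓕)`. -/
def rIdeal (𝓕 : Set (Set ℤ)) (x : ℤ × ℤ × Set ℤ) : Set (ℤ × ℤ × Set ℤ) :=
  {x} ∪ smul3 x '' Scar 𝓕

/-- The principal left ideal of `x` in `S(𝓕)`: `{x} ∪ S(𝓕)·x`. -/
def lIdeal (𝓕 : Set (Set ℤ)) (x : ℤ × ℤ × Set ℤ) : Set (ℤ × ℤ × Set ℤ) :=
  {x} ∪ (fun s => smul3 s x) '' Scar 𝓕

lemma zshift_congr {m n : ℤ} (F : Set ℤ) (h : m = n) : zshift m F = zshift n F := by rw [h]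

lemma smul3_shift_right (i j₁ j₂ a b : ℤ) (F G : Set ℤ) :
    smul3 (i, j₂, F) (a - j₁ + j₂, b, G) = smul3 (i, j₁, F) (a, b, G) := by
  unfold smul3
  dsimp only
  split_ifs <;>
    simp only [Prod.mk.injEq] <;>
    first
      | (exfalso; omega)
      | (refine ⟨by first | trivial | omega, by first | trivial | omega, ?_⟩
         congr 1 <;> first | rfl | (apply zshift_congr; omega))

lemma smul3_shift_left (i₁ i₂ j a b : ℤ) (F G : Set ℤ) :
    smul3 (a, b - i₁ + i₂, G) (i₂, j, F) = smul3 (a, b, G) (i₁, j, F) := by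
  unfold smul3
  dsimp only
  split_ifs <;>
    simp only [Prod.mk.injEq] <;>
    first
      | (exfalso; omega)
      | (refine ⟨by first | trivial | omega, by first | trivial | omega, ?_⟩
         congr 1 <;> first | rfl | (apply zshift_congr; omega))

lemma rIdeal_bound {𝓕 : Set (Set ℤ)} {i j : ℤ} {F : Set ℤ} {p : ℤ × ℤ × Set ℤ}
    (hp : p ∈ rIdeal 𝓕 (i, j, F)) : i ≤ p.1 ∧ p.2.2 ⊆ zshift (i - p.1) F := by
  rcases hp with hp | ⟨⟨a, b, G⟩, _, rfl⟩
  · rcases hp with rfl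
    exact ⟨le_refl _, by rw [zshift_congr F (show i - i = 0 by omega), zshift_zero]⟩
  · unfold smul3
    dsimp only
    split_ifs with h1 h2
    · exact ⟨by dsimp; omega,
        by dsimp
           rw [zshift_congr F (show i - (i - j + a) = j - a by omega)]
           exact Set.inter_subset_left⟩
    · exact ⟨le_refl _,
        by dsimp
           rw [zshift_congr F (show i - i = 0 by omega), zshift_zero]
           exact Set.inter_subset_left⟩
    · exact ⟨le_refl _,
        by dsimp
           rw [zshift_congr F (show i - i = 0 by omega), zshift_zero]
           exact Set.inter_subset_left⟩

lemma lIdeal_bound {𝓕 : Set (Set ℤ)} {i j : ℤ} {F : Set ℤ} {p : ℤ × ℤ × Set ℤ}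
    (hp : p ∈ lIdeal 𝓕 (i, j, F)) : j ≤ p.2.1 ∧ p.2.2 ⊆ zshift (j - p.2.1) F := by
  rcases hp with hp | ⟨⟨a, b, G⟩, _, rfl⟩
  · rcases hp with rfl
    exact ⟨le_refl _, by rw [zshift_congr F (show j - j = 0 by omega), zshift_zero]⟩
  · unfold smul3
    dsimp only
    split_ifs with h1 h2
    · exact ⟨le_refl _,
        by dsimp
           rw [zshift_congr F (show j - j = 0 by omega), zshift_zero]
           exact Set.inter_subset_right⟩
    · exact ⟨le_refl _,
        by dsimp
           rw [zshift_congr F (show j - j = 0 by omega), zshift_zero]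
           exact Set.inter_subset_right⟩
    · exact ⟨by dsimp; omega,
        by dsimp
           rw [zshift_congr F (show j - (b - i + j) = i - b by omega)]
           exact Set.inter_subset_right⟩

lemma rIdeal_le (𝓕 : Set (Set ℤ)) {F : Set ℤ} (hF : F ∈ 𝓕) (i j₁ j₂ : ℤ) :
    rIdeal 𝓕 (i, j₁, F) ⊆ rIdeal 𝓕 (i, j₂, F) := by
  rintro p (rfl | ⟨⟨a, b, G⟩, hG, rfl⟩)
  · refine Or.inr ⟨(j₂, j₁, F), hF, ?_⟩
    unfold smul3
    simp [Set.inter_self]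
  · exact Or.inr ⟨(a - j₁ + j₂, b, G), hG, smul3_shift_right i j₁ j₂ a b F G⟩

lemma lIdeal_le (𝓕 : Set (Set ℤ)) {F : Set ℤ} (hF : F ∈ 𝓕) (i₁ i₂ j : ℤ) :
    lIdeal 𝓕 (i₁, j, F) ⊆ lIdeal 𝓕 (i₂, j, F) := by
  rintro p (rfl | ⟨⟨a, b, G⟩, hG, rfl⟩)
  · refine Or.inr ⟨(i₁, i₂, F), hF, ?_⟩
    unfold smul3
    simp [Set.inter_self]
  · exact Or.inr ⟨(a, b - i₁ + i₂, G), hG, smul3_shift_left i₁ i₂ j a b F G⟩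

/-- description of Green's relations `ℛ` and `ℒ` on `S(𝓕)`. -/
theorem stmt6 (𝓕 : Set (Set ℤ)) (h : OmegaClosed 𝓕) (i₁ j₁ i₂ j₂ : ℤ) (F₁ F₂ : Set ℤ)
    (hF₁ : F₁ ∈ 𝓕) (hF₂ : F₂ ∈ 𝓕) :
    (rIdeal 𝓕 (i₁, j₁, F₁) = rIdeal 𝓕 (i₂, j₂, F₂) ↔ i₁ = i₂ ∧ F₁ = F₂) ∧
    (lIdeal 𝓕 (i₁, j₁, F₁) = lIdeal 𝓕 (i₂, j₂, F₂) ↔ j₁ = j₂ ∧ F₁ = F₂) := by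
  constructor
  · constructor
    · intro heq
      have h2in : ((i₂, j₂, F₂) : ℤ × ℤ × Set ℤ) ∈ rIdeal 𝓕 (i₁, j₁, F₁) := by
        rw [heq]; exact Or.inl rfl
      have h1in : ((i₁, j₁, F₁) : ℤ × ℤ × Set ℤ) ∈ rIdeal 𝓕 (i₂, j₂, F₂) := by
        rw [← heq]; exact Or.inl rfl
      obtain ⟨hle1, hsub1⟩ := rIdeal_bound h2in
      obtain ⟨hle2, hsub2⟩ := rIdeal_bound h1in
      have hii : i₁ = i₂ := le_antisymm hle1 hle2
      subst hii
      rw [show i₁ - (i₁, j₂, F₂).1 = 0 by simp, zshift_zero] at hsub1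
      rw [show i₁ - (i₁, j₁, F₁).1 = 0 by simp, zshift_zero] at hsub2
      exact ⟨rfl, Set.Subset.antisymm hsub2 hsub1⟩
    · rintro ⟨rfl, rfl⟩
      exact Set.Subset.antisymm (rIdeal_le 𝓕 hF₁ i₁ j₁ j₂) (rIdeal_le 𝓕 hF₁ i₁ j₂ j₁)
  · constructor
    · intro heq
      have h2in : ((i₂, j₂, F₂) : ℤ × ℤ × Set ℤ) ∈ lIdeal 𝓕 (i₁, j₁, F₁) := by
        rw [heq]; exact Or.inl rfl
      have h1in : ((i₁, j₁, F₁) : ℤ × ℤ × Set ℤ) ∈ lIdeal 𝓕 (i₂, j₂, F₂) := by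
        rw [← heq]; exact Or.inl rfl
      obtain ⟨hle1, hsub1⟩ := lIdeal_bound h2in
      obtain ⟨hle2, hsub2⟩ := lIdeal_bound h1in
      have hjj : j₁ = j₂ := le_antisymm hle1 hle2
      subst hjj
      rw [show j₁ - (i₂, j₁, F₂).2.1 = 0 by simp, zshift_zero] at hsub1
      rw [show j₁ - (i₁, j₁, F₁).2.1 = 0 by simp, zshift_zero] at hsub2
      exact ⟨rfl, Set.Subset.antisymm hsub2 hsub1⟩
    · rintro ⟨rfl, rfl⟩
      exact Set.Subset.antisymm (lIdeal_le 𝓕 hF₁ i₁ i₂ j₁) (lIdeal_le 𝓕 hF₁ i₂ i₁ j₁)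
end

section
/- Let 𝓕 be an ω-closed family of subsets of ℕ. The semigroup S(𝓕) is combinatorial: if x, y ∈ S(𝓕) satisfy both {x} ∪ x·S(𝓕) = {y} ∪ y·S(𝓕) and {x} ∪ S(𝓕)·x = {y} ∪ S(𝓕)·y (i.e. x and y are ℋ-equivalent), then x = y; so all ℋ-classes of S(𝓕) are singletons. -/
lemma smul3_first_le (x s : ℤ × ℤ × Set ℤ) : x.1 ≤ (smul3 x s).1 := by
  unfold smul3; split_ifs with h1 h2 <;> simp <;> omega

lemma smul3_second_le (s x : ℤ × ℤ × Set ℤ) : x.2.1 ≤ (smul3 s x).2.1 := by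
  unfold smul3; split_ifs with h1 h2 <;> simp <;> omega

lemma smul3_third_sub (x s : ℤ × ℤ × Set ℤ) (he : (smul3 x s).1 = x.1) :
    (smul3 x s).2.2 ⊆ x.2.2 := by
  unfold smul3 at *
  split_ifs at * with h1 h2
  · simp at he; omega
  · exact Set.inter_subset_left
  · exact Set.inter_subset_left

/-- `S(𝓕)` is combinatorial: `ℋ`-equivalent elements are equal. -/
theorem stmt7 (𝓕 : Set (Set ℤ)) (h : OmegaClosed 𝓕) (x y : ℤ × ℤ × Set ℤ)
    (hx : x ∈ Scar 𝓕) (hy : y ∈ Scar 𝓕)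
    (hR : rIdeal 𝓕 x = rIdeal 𝓕 y) (hL : lIdeal 𝓕 x = lIdeal 𝓕 y) :
    x = y := by
  have hyR : y ∈ rIdeal 𝓕 x := hR ▸ Set.mem_union_left _ rfl
  have hxR : x ∈ rIdeal 𝓕 y := hR.symm ▸ Set.mem_union_left _ rfl
  have hyL : y ∈ lIdeal 𝓕 x := hL ▸ Set.mem_union_left _ rfl
  have hxL : x ∈ lIdeal 𝓕 y := hL.symm ▸ Set.mem_union_left _ rfl
  rcases hyR with hyx | ⟨s, _, hs⟩
  · exact hyx.symm
  rcases hxR with hxy | ⟨t, _, ht⟩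
  · exact hxy
  rcases hyL with hyx | ⟨u, _, hu⟩
  · exact hyx.symm
  rcases hxL with hxy | ⟨v, _, hv⟩
  · exact hxy
  -- first components equal
  have h1 : x.1 = y.1 := by
    have := smul3_first_le x s
    have := smul3_first_le y t
    rw [hs] at *; rw [ht] at *; omega
  -- second components equal
  have hu' : smul3 u x = y := hu
  have hv' : smul3 v y = x := hv
  have h2 : x.2.1 = y.2.1 := by
    have := smul3_second_le u x
    have := smul3_second_le v y
    rw [hu'] at *; rw [hv'] at *; omega
  -- third components equal
  have h3 : x.2.2 = y.2.2 := by
    have hyx : y.2.2 ⊆ x.2.2 := by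
      have := smul3_third_sub x s (by rw [hs, h1])
      rwa [hs] at this
    have hxy : x.2.2 ⊆ y.2.2 := by
      have := smul3_third_sub y t (by rw [ht, h1])
      rwa [ht] at this
    exact Set.Subset.antisymm hxy hyx
  exact Prod.ext h1 (Prod.ext h2 h3)
end

section
/- Let 𝓕 be an ω-closed family of subsets of ℕ and let x = (i₁,j₁,F₁), y = (i₂,j₂,F₂) ∈ S(𝓕). Then x and y are 𝒟-equivalent in S(𝓕) — that is, there exists z ∈ S(𝓕) such that x and z generate the same principal left ideal and z and y generate the same principal right ideal — if and only if F₁ = F₂. -/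
lemma inter_mem (𝓕 : Set (Set ℤ)) (h : OmegaClosed 𝓕) {F G : Set ℤ}
    (hF : F ∈ 𝓕) (hG : G ∈ 𝓕) {d : ℤ} (hd : d ≤ 0) : F ∩ zshift d G ∈ 𝓕 := by
  have := h.2 (-d).toNat F hF G hG
  rwa [Int.toNat_of_nonneg (by omega), neg_neg] at this

lemma inter_mem' (𝓕 : Set (Set ℤ)) (h : OmegaClosed 𝓕) {F G : Set ℤ}
    (hF : F ∈ 𝓕) (hG : G ∈ 𝓕) : F ∩ G ∈ 𝓕 := by
  have := h.2 0 F hF G hG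
  rwa [Nat.cast_zero, neg_zero, zshift_zero] at this

lemma key_left (𝓕 : Set (Set ℤ)) (h : OmegaClosed 𝓕) (x w : ℤ × ℤ × Set ℤ)
    (hx : x.2.2 ∈ 𝓕) (hw : w ∈ lIdeal 𝓕 x) :
    w.2.2 ∈ 𝓕 ∧ x.2.1 ≤ w.2.1 ∧ w.2.2 ⊆ zshift (x.2.1 - w.2.1) x.2.2 := by
  rcases hw with hw | ⟨s, hs, rfl⟩
  · rcases hw with rfl
    exact ⟨hx, le_refl _, by rw [sub_self, zshift_zero]⟩
  · dsimp only [smul3]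
    split_ifs with h1 h2
    · refine ⟨?_, le_refl _, ?_⟩
      · rw [Set.inter_comm]
        exact inter_mem 𝓕 h hx hs (by omega)
      · simp only [sub_self, zshift_zero]
        exact Set.inter_subset_right
    · refine ⟨?_, le_refl _, ?_⟩
      · rw [Set.inter_comm]
        exact inter_mem' 𝓕 h hx hs
      · simp only [sub_self, zshift_zero]
        exact Set.inter_subset_right
    · refine ⟨inter_mem 𝓕 h hs hx (by omega), by show x.2.1 ≤ s.2.1 - x.1 + x.2.1; omega, ?_⟩
      have e : x.2.1 - (s.2.1 - x.1 + x.2.1) = x.1 - s.2.1 := by ring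
      rw [e]
      exact Set.inter_subset_right

lemma key_left_back (𝓕 : Set (Set ℤ)) (x : ℤ × ℤ × Set ℤ) (p q : ℤ) (H : Set ℤ)
    (hH : H ∈ 𝓕) (hq : x.2.1 ≤ q) (hsub : H ⊆ zshift (x.2.1 - q) x.2.2) :
    (p, q, H) ∈ lIdeal 𝓕 x := by
  refine Or.inr ⟨(p, q - x.2.1 + x.1, H), hH, ?_⟩
  dsimp only [smul3]
  split_ifs with h1 h2
  · exact absurd h1 (by omega)
  · have hq' : q = x.2.1 := by omega
    subst hq'
    rw [sub_self, zshift_zero] at hsub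
    rw [Set.inter_eq_left.mpr hsub]
  · have e1 : q - x.2.1 + x.1 - x.1 + x.2.1 = q := by ring
    have e2 : x.1 - (q - x.2.1 + x.1) = x.2.1 - q := by ring
    rw [e1, e2, Set.inter_eq_left.mpr hsub]

lemma key_right (𝓕 : Set (Set ℤ)) (h : OmegaClosed 𝓕) (x w : ℤ × ℤ × Set ℤ)
    (hx : x.2.2 ∈ 𝓕) (hw : w ∈ rIdeal 𝓕 x) :
    w.2.2 ∈ 𝓕 ∧ x.1 ≤ w.1 ∧ w.2.2 ⊆ zshift (x.1 - w.1) x.2.2 := by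
  rcases hw with hw | ⟨t, ht, rfl⟩
  · rcases hw with rfl
    exact ⟨hx, le_refl _, by rw [sub_self, zshift_zero]⟩
  · dsimp only [smul3]
    split_ifs with h1 h2
    · refine ⟨?_, by show x.1 ≤ x.1 - x.2.1 + t.1; omega, ?_⟩
      · rw [Set.inter_comm]
        exact inter_mem 𝓕 h ht hx (by omega)
      · have e : x.1 - (x.1 - x.2.1 + t.1) = x.2.1 - t.1 := by ring
        rw [e]
        exact Set.inter_subset_left
    · refine ⟨inter_mem' 𝓕 h hx ht, le_refl _, ?_⟩
      simp only [sub_self, zshift_zero]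
      exact Set.inter_subset_left
    · refine ⟨inter_mem 𝓕 h hx ht (by omega), le_refl _, ?_⟩
      simp only [sub_self, zshift_zero]
      exact Set.inter_subset_left

lemma key_right_back (𝓕 : Set (Set ℤ)) (x : ℤ × ℤ × Set ℤ) (p q : ℤ) (H : Set ℤ)
    (hH : H ∈ 𝓕) (hp : x.1 ≤ p) (hsub : H ⊆ zshift (x.1 - p) x.2.2) :
    (p, q, H) ∈ rIdeal 𝓕 x := by
  refine Or.inr ⟨(p - x.1 + x.2.1, q, H), hH, ?_⟩
  dsimp only [smul3]
  split_ifs with h1 h2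
  · have e1 : x.1 - x.2.1 + (p - x.1 + x.2.1) = p := by ring
    have e2 : x.2.1 - (p - x.1 + x.2.1) = x.1 - p := by ring
    rw [e1, e2, Set.inter_eq_right.mpr hsub]
  · have hp' : p = x.1 := by omega
    subst hp'
    rw [sub_self, zshift_zero] at hsub
    rw [Set.inter_eq_right.mpr hsub]
  · exact absurd hp (by omega)

/-- description of Green's relation `𝒟` on `S(𝓕)`:
`(i₁,j₁,F₁) 𝒟 (i₂,j₂,F₂)` iff `F₁ = F₂`. -/
theorem stmt8 (𝓕 : Set (Set ℤ)) (h : OmegaClosed 𝓕) (i₁ j₁ i₂ j₂ : ℤ) (F₁ F₂ : Set ℤ)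
    (hF₁ : F₁ ∈ 𝓕) (hF₂ : F₂ ∈ 𝓕) :
    (∃ z ∈ Scar 𝓕, lIdeal 𝓕 (i₁, j₁, F₁) = lIdeal 𝓕 z ∧
      rIdeal 𝓕 z = rIdeal 𝓕 (i₂, j₂, F₂)) ↔ F₁ = F₂ := by
  constructor
  · rintro ⟨z, hz, hl, hr⟩
    have hz' : z.2.2 ∈ 𝓕 := hz
    -- F₁ = z.2.2 from the left-ideal equality
    have m1 : z ∈ lIdeal 𝓕 (i₁, j₁, F₁) := by rw [hl]; exact Or.inl rfl
    have m2 : (i₁, j₁, F₁) ∈ lIdeal 𝓕 z := by rw [← hl]; exact Or.inl rfl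
    obtain ⟨-, hle1, hs1⟩ := key_left 𝓕 h (i₁, j₁, F₁) z hF₁ m1
    obtain ⟨-, hle2, hs2⟩ := key_left 𝓕 h z (i₁, j₁, F₁) hz' m2
    have hj : j₁ = z.2.1 := le_antisymm hle1 hle2
    have e1 : F₁ = z.2.2 := by
      apply Set.Subset.antisymm
      · have : z.2.1 - j₁ = 0 := by omega
        rwa [this, zshift_zero] at hs2
      · have : j₁ - z.2.1 = 0 := by omega
        rwa [this, zshift_zero] at hs1
    -- z.2.2 = F₂ from the right-ideal equality
    have m3 : z ∈ rIdeal 𝓕 (i₂, j₂, F₂) := by rw [← hr]; exact Or.inl rfl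
    have m4 : (i₂, j₂, F₂) ∈ rIdeal 𝓕 z := by rw [hr]; exact Or.inl rfl
    obtain ⟨-, hle3, hs3⟩ := key_right 𝓕 h (i₂, j₂, F₂) z hF₂ m3
    obtain ⟨-, hle4, hs4⟩ := key_right 𝓕 h z (i₂, j₂, F₂) hz' m4
    have hi : i₂ = z.1 := le_antisymm hle3 hle4
    have e2 : z.2.2 = F₂ := by
      apply Set.Subset.antisymm
      · have : i₂ - z.1 = 0 := by omega
        rwa [this, zshift_zero] at hs3
      · have : z.1 - i₂ = 0 := by omega
        rwa [this, zshift_zero] at hs4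
    exact e1.trans e2
  · rintro rfl
    refine ⟨(i₂, j₁, F₁), hF₁, ?_, ?_⟩
    · ext w
      obtain ⟨p, q, H⟩ := w
      constructor
      · intro hw
        obtain ⟨hH, hq, hs⟩ := key_left 𝓕 h (i₁, j₁, F₁) (p, q, H) hF₁ hw
        exact key_left_back 𝓕 (i₂, j₁, F₁) p q H hH hq hs
      · intro hw
        obtain ⟨hH, hq, hs⟩ := key_left 𝓕 h (i₂, j₁, F₁) (p, q, H) hF₁ hw
        exact key_left_back 𝓕 (i₁, j₁, F₁) p q H hH hq hs
    · ext w
      obtain ⟨p, q, H⟩ := w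
      constructor
      · intro hw
        obtain ⟨hH, hp, hs⟩ := key_right 𝓕 h (i₂, j₁, F₁) (p, q, H) hF₁ hw
        exact key_right_back 𝓕 (i₂, j₂, F₁) p q H hH hp hs
      · intro hw
        obtain ⟨hH, hp, hs⟩ := key_right 𝓕 h (i₂, j₂, F₁) (p, q, H) hF₁ hw
        exact key_right_back 𝓕 (i₂, j₁, F₁) p q H hH hp hs
end

section
/- Let 𝓕 be an ω-closed family of subsets of ℕ and let x = (i₁,j₁,F₁), y = (i₂,j₂,F₂) ∈ S(𝓕). Then x and y generate the same principal two-sided ideal of S(𝓕), i.e. {x} ∪ x·S(𝓕) ∪ S(𝓕)·x ∪ S(𝓕)·x·S(𝓕) = {y} ∪ y·S(𝓕) ∪ S(𝓕)·y ∪ S(𝓕)·y·S(𝓕), if and only if there exist k₁, k₂ ∈ ℕ such that F₁ ⊆ −k₁ + F₂ and F₂ ⊆ −k₂ + F₁. -/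
/-- The principal two-sided ideal of `x` in `S(𝓕)`:
`{x} ∪ x·S(𝓕) ∪ S(𝓕)·x ∪ S(𝓕)·x·S(𝓕)`. -/
def jIdeal (𝓕 : Set (Set ℤ)) (x : ℤ × ℤ × Set ℤ) : Set (ℤ × ℤ × Set ℤ) :=
  {x} ∪ smul3 x '' Scar 𝓕 ∪ (fun s => smul3 s x) '' Scar 𝓕 ∪
    {z | ∃ s ∈ Scar 𝓕, ∃ t ∈ Scar 𝓕, z = smul3 (smul3 s x) t}

lemma zshift_mono (a : ℤ) {F G : Set ℤ} (h : F ⊆ G) : zshift a F ⊆ zshift a G := by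
  rintro m ⟨k, hk, rfl⟩; exact ⟨k, h hk, rfl⟩

lemma zshift_trans {F G H : Set ℤ} {a b : ℕ} (h1 : F ⊆ zshift (-(a:ℤ)) G)
    (h2 : G ⊆ zshift (-(b:ℤ)) H) : F ⊆ zshift (-((a+b:ℕ):ℤ)) H := by
  intro m hm
  obtain ⟨k, hk, rfl⟩ := h1 hm
  obtain ⟨l, hl, rfl⟩ := h2 hk
  exact ⟨l, hl, by push_cast; ring⟩

lemma closure_third (𝓕 : Set (Set ℤ)) (h : OmegaClosed 𝓕) {u v : ℤ × ℤ × Set ℤ}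
    (hu : u.2.2 ∈ 𝓕) (hv : v.2.2 ∈ 𝓕) : (smul3 u v).2.2 ∈ 𝓕 := by
  unfold smul3
  split_ifs with h1 h2
  · have e : u.2.1 - v.1 = -(((v.1 - u.2.1).toNat : ℤ)) := by omega
    simp only [e]
    rw [Set.inter_comm]
    exact h.2 _ _ hv _ hu
  · have := h.2 0 _ hu _ hv
    simpa [zshift_zero] using this
  · have e : v.1 - u.2.1 = -(((u.2.1 - v.1).toNat : ℤ)) := by omega
    simp only [e]
    exact h.2 _ _ hu _ hv

lemma bound_right (u t : ℤ × ℤ × Set ℤ) :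
    ∃ m : ℕ, (smul3 u t).2.2 ⊆ zshift (-(m:ℤ)) u.2.2 := by
  unfold smul3
  split_ifs with h1 h2
  · refine ⟨(t.1 - u.2.1).toNat, ?_⟩
    have e : u.2.1 - t.1 = -(((t.1 - u.2.1).toNat : ℤ)) := by omega
    simp only [e]
    exact Set.inter_subset_left
  · exact ⟨0, by simpa [zshift_zero] using (Set.inter_subset_left : u.2.2 ∩ t.2.2 ⊆ u.2.2)⟩
  · exact ⟨0, by simpa [zshift_zero] using
      (Set.inter_subset_left : u.2.2 ∩ zshift (t.1 - u.2.1) t.2.2 ⊆ u.2.2)⟩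

lemma bound_left (s u : ℤ × ℤ × Set ℤ) :
    ∃ m : ℕ, (smul3 s u).2.2 ⊆ zshift (-(m:ℤ)) u.2.2 := by
  unfold smul3
  split_ifs with h1 h2
  · exact ⟨0, by simpa [zshift_zero] using
      (Set.inter_subset_right : zshift (s.2.1 - u.1) s.2.2 ∩ u.2.2 ⊆ u.2.2)⟩
  · exact ⟨0, by simpa [zshift_zero] using (Set.inter_subset_right : s.2.2 ∩ u.2.2 ⊆ u.2.2)⟩
  · refine ⟨(s.2.1 - u.1).toNat, ?_⟩
    have e : u.1 - s.2.1 = -(((s.2.1 - u.1).toNat : ℤ)) := by omega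
    simp only [e]
    exact Set.inter_subset_right

lemma mem_jIdeal_bound {𝓕 : Set (Set ℤ)} {z x : ℤ × ℤ × Set ℤ} (hz : z ∈ jIdeal 𝓕 x) :
    z = x ∨ ∃ m : ℕ, z.2.2 ⊆ zshift (-(m:ℤ)) x.2.2 := by
  simp only [jIdeal, Set.mem_union, Set.mem_singleton_iff, Set.mem_image,
    Set.mem_setOf_eq] at hz
  rcases hz with (((hz | ⟨t, ht, rfl⟩) | ⟨s, hs, rfl⟩) | ⟨s, hs, t, ht, rfl⟩)
  · exact Or.inl hz
  · exact Or.inr (bound_right x t)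
  · exact Or.inr (bound_left s x)
  · right
    obtain ⟨m₁, h₁⟩ := bound_right (smul3 s x) t
    obtain ⟨m₂, h₂⟩ := bound_left s x
    exact ⟨m₁ + m₂, zshift_trans h₁ h₂⟩

lemma mem_jIdeal_F {𝓕 : Set (Set ℤ)} (h : OmegaClosed 𝓕) {z x : ℤ × ℤ × Set ℤ}
    (hx : x.2.2 ∈ 𝓕) (hz : z ∈ jIdeal 𝓕 x) : z.2.2 ∈ 𝓕 := by
  simp only [jIdeal, Set.mem_union, Set.mem_singleton_iff, Set.mem_image,
    Set.mem_setOf_eq] at hz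
  rcases hz with (((hz | ⟨t, ht, rfl⟩) | ⟨s, hs, rfl⟩) | ⟨s, hs, t, ht, rfl⟩)
  · exact hz ▸ hx
  · exact closure_third 𝓕 h hx ht
  · exact closure_third 𝓕 h hs hx
  · exact closure_third 𝓕 h (closure_third 𝓕 h hs hx) ht

lemma triple_mem_jIdeal {𝓕 : Set (Set ℤ)} {K F : Set ℤ} (hK : K ∈ 𝓕) {m : ℕ}
    (hsub : K ⊆ zshift (-(m:ℤ)) F) (e f i j : ℤ) :
    (e, f, K) ∈ jIdeal 𝓕 (i, j, F) := by
  rcases Nat.eq_zero_or_pos m with hm | hm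
  · subst hm
    have hKF : K ⊆ F := by simpa [zshift_zero] using hsub
    refine Set.mem_union_right _ ⟨(e, i, K), hK, (j, f, K), hK, ?_⟩
    have h1 : smul3 (e, i, K) (i, j, F) = (e, j, K) := by
      simp only [smul3]
      simp [Set.inter_eq_left.mpr hKF]
    rw [h1]
    simp only [smul3]
    simp
  · have hKF : K ∩ zshift (-(m:ℤ)) F = K := Set.inter_eq_left.mpr hsub
    refine Set.mem_union_right _ ⟨(e, i + m, K), hK, ((m:ℤ) + j, f, K), hK, ?_⟩
    have h1 : smul3 (e, i + m, K) (i, j, F) = (e, (m:ℤ) + j, K) := by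
      simp only [smul3]
      rw [if_neg (by omega), if_neg (by omega)]
      have e2 : i - (i + (m:ℤ)) = -(m:ℤ) := by ring
      rw [e2, hKF]
      have e3 : i + (m:ℤ) - i + j = (m:ℤ) + j := by ring
      rw [e3]
    rw [h1]
    simp only [smul3]
    simp

lemma jIdeal_subset {𝓕 : Set (Set ℤ)} (h : OmegaClosed 𝓕) {F G : Set ℤ}
    (hF : F ∈ 𝓕) (hG : G ∈ 𝓕) {k : ℕ} (hk : F ⊆ zshift (-(k:ℤ)) G) (i j i' j' : ℤ) :
    jIdeal 𝓕 (i, j, F) ⊆ jIdeal 𝓕 (i', j', G) := by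
  intro z hz
  have hz𝓕 : z.2.2 ∈ 𝓕 := mem_jIdeal_F h hF hz
  have hb : ∃ m : ℕ, z.2.2 ⊆ zshift (-(m:ℤ)) G := by
    rcases mem_jIdeal_bound hz with rfl | ⟨m, hm⟩
    · exact ⟨k, hk⟩
    · exact ⟨m + k, zshift_trans hm hk⟩
  obtain ⟨m, hm⟩ := hb
  have : (z.1, z.2.1, z.2.2) ∈ jIdeal 𝓕 (i', j', G) := triple_mem_jIdeal hz𝓕 hm z.1 z.2.1 i' j'
  simpa using this

/-- description of Green's relation `𝒥` on `S(𝓕)`. -/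
theorem stmt9 (𝓕 : Set (Set ℤ)) (h : OmegaClosed 𝓕) (i₁ j₁ i₂ j₂ : ℤ) (F₁ F₂ : Set ℤ)
    (hF₁ : F₁ ∈ 𝓕) (hF₂ : F₂ ∈ 𝓕) :
    jIdeal 𝓕 (i₁, j₁, F₁) = jIdeal 𝓕 (i₂, j₂, F₂) ↔
      ∃ k₁ k₂ : ℕ, F₁ ⊆ zshift (-(k₁ : ℤ)) F₂ ∧ F₂ ⊆ zshift (-(k₂ : ℤ)) F₁ := by
  constructor
  · intro hEq
    have hy : (i₂, j₂, F₂) ∈ jIdeal 𝓕 (i₁, j₁, F₁) := by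
      rw [hEq]
      exact Set.mem_union_left _ (Set.mem_union_left _ (Set.mem_union_left _ rfl))
    have hx : (i₁, j₁, F₁) ∈ jIdeal 𝓕 (i₂, j₂, F₂) := by
      rw [← hEq]
      exact Set.mem_union_left _ (Set.mem_union_left _ (Set.mem_union_left _ rfl))
    have h1 := mem_jIdeal_bound hy
    have h2 := mem_jIdeal_bound hx
    have k1 : ∃ k : ℕ, F₁ ⊆ zshift (-(k:ℤ)) F₂ := by
      rcases h2 with heq | ⟨m, hm⟩
      · have hF : F₁ = F₂ := congrArg (fun p => p.2.2) heq
        exact ⟨0, by simp [hF, zshift_zero]⟩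
      · exact ⟨m, hm⟩
    have k2 : ∃ k : ℕ, F₂ ⊆ zshift (-(k:ℤ)) F₁ := by
      rcases h1 with heq | ⟨m, hm⟩
      · have hF : F₂ = F₁ := congrArg (fun p => p.2.2) heq
        exact ⟨0, by simp [hF, zshift_zero]⟩
      · exact ⟨m, hm⟩
    obtain ⟨a, ha⟩ := k1; obtain ⟨b, hb⟩ := k2
    exact ⟨a, b, ha, hb⟩
  · rintro ⟨k₁, k₂, h12, h21⟩
    apply Set.Subset.antisymm
    · exact jIdeal_subset h hF₁ hF₂ h12 i₁ j₁ i₂ j₂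
    · exact jIdeal_subset h hF₂ hF₁ h21 i₂ j₂ i₁ j₁
end

section
/- Let 𝓕 be an ω-closed family of subsets of ℕ with ∅ ∈ 𝓕 and such that 𝓕 contains at least one nonempty set, and let I = ℤ × ℤ × {∅} ⊆ S(𝓕). Then the only two-sided ideals of S(𝓕) are I and S(𝓕) (equivalently, the Rees quotient S(𝓕)/I is 0-simple) if and only if for all nonempty F₁, F₂ ∈ 𝓕 there exist k₁, k₂ ∈ ℕ such that F₁ ⊆ −k₁ + F₂ and F₂ ⊆ −k₂ + F₁. -/
lemma zshift_mono_s11 {A B : Set ℤ} (n : ℤ) (hAB : A ⊆ B) : zshift n A ⊆ zshift n B := by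
  rintro m ⟨k, hk, rfl⟩; exact ⟨k, hAB hk, rfl⟩

lemma zshift_zshift (m n : ℤ) (F : Set ℤ) : zshift m (zshift n F) = zshift (m + n) F := by
  ext x
  constructor
  · rintro ⟨k, ⟨l, hl, rfl⟩, rfl⟩; exact ⟨l, hl, by ring⟩
  · rintro ⟨l, hl, rfl⟩; exact ⟨n + l, ⟨l, hl, rfl⟩, by ring⟩

lemma smul3_eqc (a c b : ℤ) (F G : Set ℤ) :
    smul3 (a, c, F) (c, b, G) = (a, b, F ∩ G) := by
  simp [smul3]

lemma smul3_shift (i j b : ℤ) (k : ℕ) (F₀ F : Set ℤ) (hsub : F ⊆ zshift (-(k : ℤ)) F₀) :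
    smul3 (i, j, F₀) (j + (k : ℤ), b, F) = (i + (k : ℤ), b, F) := by
  rcases Nat.eq_zero_or_pos k with hk | hk
  · subst hk
    simp only [Nat.cast_zero, neg_zero, zshift_zero] at hsub
    simp [smul3, Set.inter_eq_right.mpr hsub]
  · have hlt : j < j + (k : ℤ) := by
      have : (0 : ℤ) < (k : ℤ) := by exact_mod_cast hk
      omega
    have h1 : j - (j + (k : ℤ)) = -(k : ℤ) := by ring
    have h2 : i - j + (j + (k : ℤ)) = i + (k : ℤ) := by ring
    simp only [smul3, if_pos hlt]
    rw [h1, h2, Set.inter_eq_right.mpr hsub]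

lemma smul3_mem_Scar {𝓕 : Set (Set ℤ)} (h : OmegaClosed 𝓕) {x y : ℤ × ℤ × Set ℤ}
    (hx : x ∈ Scar 𝓕) (hy : y ∈ Scar 𝓕) : smul3 x y ∈ Scar 𝓕 := by
  obtain ⟨-, hcl⟩ := h
  simp only [Scar, Set.mem_setOf_eq] at hx hy ⊢
  unfold smul3
  split_ifs with h1 h2
  · obtain ⟨n, hn⟩ : ∃ n : ℕ, x.2.1 - y.1 = -(n : ℤ) := ⟨(y.1 - x.2.1).toNat, by omega⟩
    simp only [hn, Set.inter_comm]
    exact hcl n _ hy _ hx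
  · have : x.2.2 ∩ y.2.2 = x.2.2 ∩ zshift (-((0 : ℕ) : ℤ)) y.2.2 := by
      rw [Nat.cast_zero, neg_zero, zshift_zero]
    simp only [this]
    exact hcl 0 _ hx _ hy
  · obtain ⟨n, hn⟩ : ∃ n : ℕ, y.1 - x.2.1 = -(n : ℤ) := ⟨(x.2.1 - y.1).toNat, by omega⟩
    simp only [hn]
    exact hcl n _ hx _ hy

lemma smul3_sub_left (x y : ℤ × ℤ × Set ℤ) :
    ∃ n : ℕ, (smul3 x y).2.2 ⊆ zshift (-(n : ℤ)) x.2.2 := by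
  unfold smul3
  split_ifs with h1 h2
  · obtain ⟨n, hn⟩ : ∃ n : ℕ, x.2.1 - y.1 = -(n : ℤ) := ⟨(y.1 - x.2.1).toNat, by omega⟩
    exact ⟨n, by rw [← hn]; exact Set.inter_subset_left⟩
  · exact ⟨0, by simpa [zshift_zero] using (Set.inter_subset_left (s := x.2.2) (t := y.2.2))⟩
  · exact ⟨0, by simpa [zshift_zero] using
      (Set.inter_subset_left (s := x.2.2) (t := zshift (y.1 - x.2.1) y.2.2))⟩

lemma smul3_sub_right (x y : ℤ × ℤ × Set ℤ) :
    ∃ n : ℕ, (smul3 x y).2.2 ⊆ zshift (-(n : ℤ)) y.2.2 := by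
  unfold smul3
  split_ifs with h1 h2
  · exact ⟨0, by simpa [zshift_zero] using
      (Set.inter_subset_right (s := zshift (x.2.1 - y.1) x.2.2) (t := y.2.2))⟩
  · exact ⟨0, by simpa [zshift_zero] using (Set.inter_subset_right (s := x.2.2) (t := y.2.2))⟩
  · obtain ⟨n, hn⟩ : ∃ n : ℕ, y.1 - x.2.1 = -(n : ℤ) := ⟨(x.2.1 - y.1).toNat, by omega⟩
    exact ⟨n, by rw [← hn]; exact Set.inter_subset_right⟩

/-- `0`-simplicity criterion for `S(𝓕)` when `∅ ∈ 𝓕` and `𝓕` contains a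
nonempty set: the only two-sided ideals of `S(𝓕)` are `I = ℤ × ℤ × {∅}` and `S(𝓕)`
iff any two nonempty members of `𝓕` dominate each other up to shifts. -/
theorem stmt11 (𝓕 : Set (Set ℤ)) (h : OmegaClosed 𝓕) (hempty : (∅ : Set ℤ) ∈ 𝓕)
    (hne : ∃ F ∈ 𝓕, F.Nonempty) :
    (∀ J : Set (ℤ × ℤ × Set ℤ), J.Nonempty → J ⊆ Scar 𝓕 →
      (∀ x ∈ J, ∀ s ∈ Scar 𝓕, smul3 s x ∈ J ∧ smul3 x s ∈ J) →
      J = {x : ℤ × ℤ × Set ℤ | x.2.2 = (∅ : Set ℤ)} ∨ J = Scar 𝓕) ↔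
    (∀ F₁ ∈ 𝓕, ∀ F₂ ∈ 𝓕, F₁.Nonempty → F₂.Nonempty →
      ∃ k₁ k₂ : ℕ, F₁ ⊆ zshift (-(k₁ : ℤ)) F₂ ∧ F₂ ⊆ zshift (-(k₂ : ℤ)) F₁) := by
  constructor
  · -- ideals ⇒ domination
    intro hideal F₁ hF₁ F₂ hF₂ hF₁ne hF₂ne
    have key : ∀ G ∈ 𝓕, G.Nonempty → ∀ F ∈ 𝓕, ∃ k : ℕ, F ⊆ zshift (-(k : ℤ)) G := by
      intro G hG hGne F hF
      set J : Set (ℤ × ℤ × Set ℤ) :=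
        {x | x ∈ Scar 𝓕 ∧ ∃ k : ℕ, x.2.2 ⊆ zshift (-(k : ℤ)) G} with hJdef
      have hGz : G ⊆ zshift (-((0 : ℕ) : ℤ)) G := by
        rw [Nat.cast_zero, neg_zero, zshift_zero]
      have hGJ : ((0, 0, G) : ℤ × ℤ × Set ℤ) ∈ J := ⟨hG, 0, hGz⟩
      have hJne : J.Nonempty := ⟨_, hGJ⟩
      have hJsub : J ⊆ Scar 𝓕 := fun x hx => hx.1
      have hJideal : ∀ x ∈ J, ∀ s ∈ Scar 𝓕, smul3 s x ∈ J ∧ smul3 x s ∈ J := by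
        rintro x ⟨hxS, k, hk⟩ s hsS
        constructor
        · refine ⟨smul3_mem_Scar h hsS hxS, ?_⟩
          obtain ⟨n, hn⟩ := smul3_sub_right s x
          refine ⟨n + k, ?_⟩
          have : zshift (-(n : ℤ)) x.2.2 ⊆ zshift (-((n + k : ℕ) : ℤ)) G := by
            have h1 := zshift_mono_s11 (-(n : ℤ)) hk
            rw [zshift_zshift] at h1
            have : -(n : ℤ) + -(k : ℤ) = -((n + k : ℕ) : ℤ) := by push_cast; ring
            rwa [this] at h1
          exact hn.trans this
        · refine ⟨smul3_mem_Scar h hxS hsS, ?_⟩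
          obtain ⟨n, hn⟩ := smul3_sub_left x s
          refine ⟨n + k, ?_⟩
          have : zshift (-(n : ℤ)) x.2.2 ⊆ zshift (-((n + k : ℕ) : ℤ)) G := by
            have h1 := zshift_mono_s11 (-(n : ℤ)) hk
            rw [zshift_zshift] at h1
            have : -(n : ℤ) + -(k : ℤ) = -((n + k : ℕ) : ℤ) := by push_cast; ring
            rwa [this] at h1
          exact hn.trans this
      rcases hideal J hJne hJsub hJideal with hJI | hJS
      · exfalso
        rw [hJI] at hGJ
        simp only [Set.mem_setOf_eq] at hGJ
        exact hGne.ne_empty hGJ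
      · have : ((0, 0, F) : ℤ × ℤ × Set ℤ) ∈ J := by rw [hJS]; exact hF
        exact this.2
    obtain ⟨k₁, hk₁⟩ := key F₂ hF₂ hF₂ne F₁ hF₁
    obtain ⟨k₂, hk₂⟩ := key F₁ hF₁ hF₁ne F₂ hF₂
    exact ⟨k₁, k₂, hk₁, hk₂⟩
  · -- domination ⇒ ideals
    intro hdom J hJne hJsub hJideal
    -- First: every (i, j, ∅) belongs to J.
    have hI : ∀ i j : ℤ, ((i, j, (∅ : Set ℤ)) : ℤ × ℤ × Set ℤ) ∈ J := by
      obtain ⟨x, hxJ⟩ := hJne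
      obtain ⟨x1, x2, F⟩ := x
      intro i j
      have hsS : ((x2, j, (∅ : Set ℤ)) : ℤ × ℤ × Set ℤ) ∈ Scar 𝓕 := hempty
      have step1 := (hJideal _ hxJ _ hsS).2
      rw [smul3_eqc, Set.inter_empty] at step1
      have hsS2 : ((i, x1, (∅ : Set ℤ)) : ℤ × ℤ × Set ℤ) ∈ Scar 𝓕 := hempty
      have step2 := (hJideal _ step1 _ hsS2).1
      rwa [smul3_eqc, Set.inter_empty] at step2
    by_cases hcase : ∀ x ∈ J, x.2.2 = (∅ : Set ℤ)
    · left
      ext x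
      constructor
      · intro hx; exact hcase x hx
      · intro hx
        obtain ⟨a, b, F⟩ := x
        simp only [Set.mem_setOf_eq] at hx
        subst hx
        exact hI a b
    · right
      push_neg at hcase
      obtain ⟨x, hxJ, hxne⟩ := hcase
      obtain ⟨i0, j0, F0⟩ := x
      have hF0 : F0 ∈ 𝓕 := hJsub hxJ
      have hF0ne : F0.Nonempty := hxne
      refine Set.Subset.antisymm hJsub ?_
      rintro ⟨a, b, F⟩ hF
      have hF' : F ∈ 𝓕 := hF
      by_cases hFe : F = ∅
      · subst hFe; exact hI a b
      · have hFne : F.Nonempty := Set.nonempty_iff_ne_empty.mpr hFe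
        obtain ⟨k₁, k₂, h1, h2⟩ := hdom F hF' F0 hF0 hFne hF0ne
        have hsS : ((j0 + (k₁ : ℤ), b, F) : ℤ × ℤ × Set ℤ) ∈ Scar 𝓕 := hF'
        have step1 := (hJideal _ hxJ _ hsS).2
        rw [smul3_shift i0 j0 b k₁ F0 F h1] at step1
        have hsS2 : ((a, i0 + (k₁ : ℤ), F) : ℤ × ℤ × Set ℤ) ∈ Scar 𝓕 := hF'
        have step2 := (hJideal _ step1 _ hsS2).1
        rwa [smul3_eqc, Set.inter_self] at step2
end

section
/- Let 𝓕 be an ω-closed family of subsets of ℕ with ∅ ∉ 𝓕. Then S(𝓕) is an E-unitary inverse semigroup: if e, f, s ∈ S(𝓕), e and f are idempotents, and e = s·f, then s is an idempotent. -/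
/-- if `∅ ∉ 𝓕` then `S(𝓕)` is `E`-unitary: any element lying above an
idempotent in the natural partial order is itself an idempotent. -/
theorem stmt12 (𝓕 : Set (Set ℤ)) (h : OmegaClosed 𝓕) (hempty : (∅ : Set ℤ) ∉ 𝓕)
    (e f s : ℤ × ℤ × Set ℤ) (he : e ∈ Scar 𝓕) (hf : f ∈ Scar 𝓕) (hs : s ∈ Scar 𝓕)
    (hee : smul3 e e = e) (hff : smul3 f f = f) (hef : e = smul3 s f) :
    smul3 s s = s := by
  have key : ∀ a b : ℤ, ∀ F : Set ℤ, smul3 (a, b, F) (a, b, F) = (a, b, F) → a = b := by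
    intro a b F hx
    rcases lt_trichotomy b a with hc | hc | hc
    · rw [smul3, if_pos hc] at hx
      simp only [Prod.mk.injEq] at hx
      omega
    · exact hc.symm
    · rw [smul3, if_neg (by dsimp only; omega), if_neg (by dsimp only; omega)] at hx
      simp only [Prod.mk.injEq] at hx
      omega
  obtain ⟨ei, ej, eF⟩ := e
  obtain ⟨fi, fj, fF⟩ := f
  obtain ⟨si, sj, sF⟩ := s
  have h1 : ei = ej := key _ _ _ hee
  have h2 : fi = fj := key _ _ _ hff
  have hij : si = sj := by
    rcases lt_trichotomy sj fi with hc | hc | hc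
    · rw [smul3, if_pos hc] at hef
      simp only [Prod.mk.injEq] at hef
      omega
    · rw [smul3, if_neg (by dsimp only; omega), if_pos hc] at hef
      simp only [Prod.mk.injEq] at hef
      omega
    · rw [smul3, if_neg (by dsimp only; omega), if_neg (by dsimp only; omega)] at hef
      simp only [Prod.mk.injEq] at hef
      omega
  rw [smul3, if_neg (by dsimp only; omega), if_pos hij.symm]
  simp
end

section
/- Let 𝓕 be a nonempty ω-closed family of subsets of ℕ and let B(𝓕) denote the Rees quotient of S(𝓕) by the congruence that identifies x and y whenever x = y or the third components of both x and y equal ∅ (so B(𝓕) = S(𝓕) when ∅ ∉ 𝓕). Then B(𝓕) has an identity element (an element e with e·x = x·e = x for all x) if and only if 𝓕 = {∅}. -/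
/-- The congruence on `S(𝓕)` identifying `x` and `y` iff `x = y` or both third
components are empty (the Rees congruence by the ideal of `∅`-triples). -/
def reesEq (x y : ℤ × ℤ × Set ℤ) : Prop :=
  x = y ∨ (x.2.2 = (∅ : Set ℤ) ∧ y.2.2 = (∅ : Set ℤ))

/-- the Rees quotient `B(𝓕)` of `S(𝓕)` by the `∅`-triples has an identity
element iff `𝓕 = {∅}`. -/
theorem stmt13 (𝓕 : Set (Set ℤ)) (h : OmegaClosed 𝓕) (hne : 𝓕.Nonempty) :
    (∃ e ∈ Scar 𝓕, ∀ x ∈ Scar 𝓕, reesEq (smul3 e x) x ∧ reesEq (smul3 x e) x) ↔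
      𝓕 = {(∅ : Set ℤ)} := by

  constructor
  · rintro ⟨e, heS, hid⟩
    have hall : ∀ G ∈ 𝓕, G = (∅ : Set ℤ) := by
      intro G hG
      by_contra hGne
      set x : ℤ × ℤ × Set ℤ := (e.1 - 1, e.1 - 1, G) with hxdef
      have hx : x ∈ Scar 𝓕 := hG
      obtain ⟨-, h2⟩ := hid x hx
      rcases h2 with heq | ⟨h1, h2⟩
      · have hlt : x.2.1 < e.1 := by simp [hxdef]
        have : (smul3 x e).1 = x.1 - x.2.1 + e.1 := by
          simp only [smul3, if_pos hlt]
        rw [heq] at this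
        simp [hxdef] at this
      · exact hGne h2
    ext G
    simp only [Set.mem_singleton_iff]
    constructor
    · exact hall G
    · rintro rfl
      obtain ⟨F, hF⟩ := hne
      have := hall F hF
      rwa [this] at hF
  · rintro rfl
    refine ⟨(0, 0, ∅), rfl, ?_⟩
    intro x hx
    have hx' : x.2.2 = (∅ : Set ℤ) := hx
    constructor
    · right
      refine ⟨?_, hx'⟩
      simp only [smul3]
      split_ifs <;> simp [hx', zshift]
    · right
      refine ⟨?_, hx'⟩
      simp only [smul3]
      split_ifs <;> simp [hx', zshift]
end

section
/- Let 𝓕 be an ω-closed family of subsets of ℕ with ∅ ∈ 𝓕. Then the following are equivalent: (a) there exists a map g : S(𝓕) → M (where M is the semigroup of ℤ×ℤ matrix units) such that g(x·y) = g(x)·g(y) for all x, y, g is surjective, and g(x) = g(y) holds exactly when x = y or the third components of both x and y equal ∅ (i.e. the Rees quotient of S(𝓕) by the ideal of ∅-triples is isomorphic to M); (b) 𝓕 = {∅, F} where F is a one-element subset of ℕ. -/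
/-- The semigroup of `ℤ × ℤ` matrix units: `(a,b)·(c,d) = (a,d)` if `b = c`, and `0`
(represented by `none`) otherwise, with `0` absorbing. -/
def mmul : Option (ℤ × ℤ) → Option (ℤ × ℤ) → Option (ℤ × ℤ)
  | some (a, b), some (c, d) => if b = c then some (a, d) else none
  | _, _ => none

lemma zshift_empty (n : ℤ) : zshift n ∅ = ∅ := by ext x; simp [zshift]

lemma zshift_singleton (n k : ℤ) : zshift n {k} = {n + k} := by ext x; simp [zshift]

lemma mmul_none_left (y : Option (ℤ × ℤ)) : mmul none y = none := rfl

lemma mmul_none_right (x : Option (ℤ × ℤ)) : mmul x none = none := by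
  rcases x with _ | ⟨a, b⟩ <;> rfl

lemma mmul_some (a b c d : ℤ) :
    mmul (some (a, b)) (some (c, d)) = if b = c then some (a, d) else none := rfl

/-- the Rees quotient of `S(𝓕)` by the ideal of `∅`-triples is isomorphic
to the semigroup of `ℤ × ℤ` matrix units iff `𝓕 = {∅, F}` with `F` a one-element
subset of `ℕ`. -/
theorem stmt16 (𝓕 : Set (Set ℤ)) (h : OmegaClosed 𝓕) (hempty : (∅ : Set ℤ) ∈ 𝓕) :
    (∃ g : {x : ℤ × ℤ × Set ℤ // x ∈ Scar 𝓕} → Option (ℤ × ℤ),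
      Function.Surjective g ∧
      (∀ a b c : {x : ℤ × ℤ × Set ℤ // x ∈ Scar 𝓕},
        (c : ℤ × ℤ × Set ℤ) = smul3 a b → g c = mmul (g a) (g b)) ∧
      (∀ a b : {x : ℤ × ℤ × Set ℤ // x ∈ Scar 𝓕},
        g a = g b ↔ (a = b ∨ ((a : ℤ × ℤ × Set ℤ).2.2 = (∅ : Set ℤ) ∧
          (b : ℤ × ℤ × Set ℤ).2.2 = (∅ : Set ℤ))))) ↔
    (∃ k : ℕ, 𝓕 = {(∅ : Set ℤ), {(k : ℤ)}}) := by
  classical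
  constructor
  · rintro ⟨g, hsurj, hmul, hinj⟩
    set e : {x : ℤ × ℤ × Set ℤ // x ∈ Scar 𝓕} := ⟨(0, 0, (∅ : Set ℤ)), hempty⟩ with he
    have zero_iff : ∀ x : {x : ℤ × ℤ × Set ℤ // x ∈ Scar 𝓕},
        g x = g e ↔ (x : ℤ × ℤ × Set ℤ).2.2 = ∅ := by
      intro x
      rw [hinj]
      constructor
      · rintro (rfl | ⟨h1, _⟩)
        · rfl
        · exact h1
      · intro hx; exact Or.inr ⟨hx, rfl⟩
    -- there is a nonempty member
    have hne : ∃ F ∈ 𝓕, F ≠ (∅ : Set ℤ) := by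
      obtain ⟨x1, hx1⟩ := hsurj (some (0, 0))
      obtain ⟨x2, hx2⟩ := hsurj none
      by_cases h0 : g e = none
      · refine ⟨x1.1.2.2, x1.2, fun hc => ?_⟩
        have := (zero_iff x1).mpr hc
        rw [hx1, h0] at this; exact Option.some_ne_none _ this
      · refine ⟨x2.1.2.2, x2.2, fun hc => ?_⟩
        have := (zero_iff x2).mpr hc
        rw [hx2] at this; exact h0 this.symm
    obtain ⟨F0, hF0, hF0ne⟩ := hne
    -- the zero of the quotient is `none`
    have hz : g e = none := by
      by_contra hzn
      obtain ⟨⟨a, b⟩, hzv⟩ := Option.ne_none_iff_exists'.mp hzn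
      have h1 : g e = mmul (g e) (g e) := by
        refine hmul e e e ?_
        simp [he, smul3]
      have hba : b = a := by
        by_contra hba
        rw [hzv] at h1
        rw [mmul_some] at h1
        simp [hba] at h1
      subst hba
      have h2 : g e = mmul (g ⟨(0, 0, F0), hF0⟩) (g e) := by
        refine hmul ⟨(0, 0, F0), hF0⟩ e e ?_
        simp [he, smul3]
      rcases hgx : g ⟨(0, 0, F0), hF0⟩ with _ | ⟨p, q⟩
      · rw [hzv, hgx, mmul_none_left] at h2; exact Option.some_ne_none _ h2
      · rw [hzv, hgx, mmul_some] at h2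
        have hpq : q = b ∧ p = b := by
          by_cases hq : q = b
          · subst hq
            simp at h2
            exact ⟨rfl, h2.symm⟩
          · simp [hq] at h2
        have : g ⟨(0, 0, F0), hF0⟩ = g e := by
          rw [hgx, hzv, hpq.1, hpq.2]
        exact hF0ne ((zero_iff _).mp this)
    have gnone : ∀ x : {x : ℤ × ℤ × Set ℤ // x ∈ Scar 𝓕},
        g x = none ↔ (x : ℤ × ℤ × Set ℤ).2.2 = ∅ := by
      intro x; rw [← hz]; exact zero_iff x
    -- idempotents
    have idem : ∀ (i : ℤ) (F : Set ℤ) (hF : F ∈ 𝓕), F ≠ ∅ →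
        ∃ a : ℤ, g ⟨(i, i, F), hF⟩ = some (a, a) := by
      intro i F hF hFne
      have h1 : g ⟨(i, i, F), hF⟩ = mmul (g ⟨(i, i, F), hF⟩) (g ⟨(i, i, F), hF⟩) := by
        refine hmul _ _ _ ?_
        simp [smul3]
      rcases hgx : g ⟨(i, i, F), hF⟩ with _ | ⟨p, q⟩
      · exact absurd ((gnone _).mp hgx) hFne
      · rw [hgx, mmul_some] at h1
        by_cases hq : q = p
        · refine ⟨p, ?_⟩
          rw [hq]
        · simp [hq] at h1
    -- every nonempty member is a singleton
    have hsing : ∀ F ∈ 𝓕, F ≠ (∅ : Set ℤ) → ∃ m : ℤ, F = {m} := by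
      intro F hF hFne
      obtain ⟨m, hm⟩ := Set.nonempty_iff_ne_empty.mpr hFne
      refine ⟨m, ?_⟩
      by_contra hFm
      have hex : ∃ m' ∈ F, m' ≠ m := by
        by_contra hc; push_neg at hc
        exact hFm (Set.eq_singleton_iff_unique_mem.mpr ⟨hm, hc⟩)
      obtain ⟨m', hm', hmm⟩ := hex
      obtain ⟨a, b, ha, hb, hab⟩ : ∃ a b : ℤ, a ∈ F ∧ b ∈ F ∧ a < b := by
        rcases lt_or_gt_of_ne hmm with h' | h'
        · exact ⟨m', m, hm', hm, h'⟩
        · exact ⟨m, m', hm, hm', h'⟩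
      set n : ℕ := (b - a).toNat with hn
      have hnz : (n : ℤ) = b - a := Int.toNat_of_nonneg (by omega)
      have hnpos : (0 : ℤ) < (n : ℤ) := by omega
      have hG : F ∩ zshift (-(n : ℤ)) F ∈ 𝓕 := h.2 n F hF F hF
      have h1 : g ⟨((n : ℤ), (n : ℤ), F ∩ zshift (-(n : ℤ)) F), hG⟩ =
          mmul (g ⟨(0, 0, F), hF⟩) (g ⟨((n : ℤ), (n : ℤ), F), hF⟩) := by
        refine hmul _ _ _ ?_
        simp only [smul3]
        rw [if_pos hnpos]
        simp [Set.inter_comm, zero_sub]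
      obtain ⟨p, hp⟩ := idem 0 F hF hFne
      obtain ⟨q, hq⟩ := idem n F hF hFne
      have hpq : p ≠ q := by
        intro hpq
        have heq : g ⟨(0, 0, F), hF⟩ = g ⟨((n : ℤ), (n : ℤ), F), hF⟩ := by
          rw [hp, hq, hpq]
        rcases (hinj _ _).mp heq with h' | ⟨h', _⟩
        · have := congrArg (fun x : {x : ℤ × ℤ × Set ℤ // x ∈ Scar 𝓕} => x.1.1) h'
          simp at this; omega
        · exact hFne h'
      rw [hp, hq, mmul_some, if_neg hpq] at h1
      have hGe : F ∩ zshift (-(n : ℤ)) F = ∅ := (gnone _).mp h1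
      have : a ∈ F ∩ zshift (-(n : ℤ)) F := ⟨ha, ⟨b, hb, by omega⟩⟩
      rw [hGe] at this
      exact this
    -- at most one singleton
    have huniq : ∀ m m' : ℤ, ({m} : Set ℤ) ∈ 𝓕 → ({m'} : Set ℤ) ∈ 𝓕 → m' < m → False := by
      intro m m' hm hm' hlt
      set n : ℕ := (m - m').toNat with hn
      have hnz : (n : ℤ) = m - m' := Int.toNat_of_nonneg (by omega)
      have hnpos : (0 : ℤ) < (n : ℤ) := by omega
      have key : g ⟨((n : ℤ), 0, ({m'} : Set ℤ)), hm'⟩ =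
          mmul (g ⟨(0, 0, ({m} : Set ℤ)), hm⟩) (g ⟨((n : ℤ), 0, ({m'} : Set ℤ)), hm'⟩) := by
        refine hmul _ _ _ ?_
        simp only [smul3]
        rw [if_pos hnpos, zshift_singleton]
        have h' : (0 : ℤ) - (n : ℤ) + m = m' := by omega
        rw [h', Set.inter_self]
        norm_num
      have key2 : g ⟨((n : ℤ), 0, ({m'} : Set ℤ)), hm'⟩ =
          mmul (g ⟨((n : ℤ), (n : ℤ), ({m'} : Set ℤ)), hm'⟩)
            (g ⟨((n : ℤ), 0, ({m'} : Set ℤ)), hm'⟩) := by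
        refine hmul _ _ _ ?_
        simp [smul3]
      obtain ⟨p, hp⟩ := idem 0 {m} hm (Set.singleton_ne_empty m)
      obtain ⟨q, hq⟩ := idem n {m'} hm' (Set.singleton_ne_empty m')
      rcases hy : g ⟨((n : ℤ), 0, ({m'} : Set ℤ)), hm'⟩ with _ | ⟨r, s⟩
      · exact Set.singleton_ne_empty m' ((gnone _).mp hy)
      · rw [hq, hy, mmul_some] at key2
        have hqr : q = r := by
          by_contra hqr; rw [if_neg hqr] at key2; exact Option.some_ne_none _ key2
        have hpq : p ≠ q := by
          intro hpq
          have heq : g ⟨(0, 0, ({m} : Set ℤ)), hm⟩ =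
              g ⟨((n : ℤ), (n : ℤ), ({m'} : Set ℤ)), hm'⟩ := by rw [hp, hq, hpq]
          rcases (hinj _ _).mp heq with h' | ⟨h', _⟩
          · have := congrArg (fun x : {x : ℤ × ℤ × Set ℤ // x ∈ Scar 𝓕} => x.1.1) h'
            simp at this; omega
          · exact Set.singleton_ne_empty m h'
        have hpr : p ≠ r := hqr ▸ hpq
        rw [hp, hy, mmul_some, if_neg hpr] at key
        exact Option.some_ne_none _ key
    -- conclusion
    obtain ⟨x1, hx1⟩ := hsurj (some (0, 0))
    have hx1ne : (x1 : ℤ × ℤ × Set ℤ).2.2 ≠ ∅ := by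
      intro hc
      have := (gnone x1).mpr hc
      rw [hx1] at this; exact Option.some_ne_none _ this
    obtain ⟨m, hmF⟩ := hsing _ x1.2 hx1ne
    have hm𝓕 : ({m} : Set ℤ) ∈ 𝓕 := hmF ▸ x1.2
    have hm0 : 0 ≤ m := h.1 _ hm𝓕 m rfl
    refine ⟨m.toNat, ?_⟩
    have hmt : ((m.toNat : ℤ)) = m := Int.toNat_of_nonneg hm0
    rw [hmt]
    ext F
    simp only [Set.mem_insert_iff, Set.mem_singleton_iff]
    constructor
    · intro hF
      by_cases hFe : F = ∅
      · exact Or.inl hFe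
      · obtain ⟨m', hFm'⟩ := hsing F hF hFe
        subst hFm'
        right
        rcases lt_trichotomy m' m with hlt | heq | hlt
        · exact (huniq m m' hm𝓕 hF hlt).elim
        · rw [heq]
        · exact (huniq m' m hF hm𝓕 hlt).elim
    · rintro (rfl | rfl)
      · exact hempty
      · exact hm𝓕
  · rintro ⟨k, rfl⟩
    have hk : ({(k : ℤ)} : Set ℤ) ∈ ({(∅ : Set ℤ), {(k : ℤ)}} : Set (Set ℤ)) := Or.inr rfl
    have hkne : ({(k : ℤ)} : Set ℤ) ≠ ∅ := Set.singleton_ne_empty _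
    have hkne' : (∅ : Set ℤ) ≠ {(k : ℤ)} := hkne.symm
    refine ⟨fun x => if (x : ℤ × ℤ × Set ℤ).2.2 = ∅ then none
      else some ((x : ℤ × ℤ × Set ℤ).1, (x : ℤ × ℤ × Set ℤ).2.1), ?_, ?_, ?_⟩
    · rintro (_ | ⟨a, b⟩)
      · exact ⟨⟨(0, 0, ∅), Or.inl rfl⟩, by simp⟩
      · exact ⟨⟨(a, b, {(k : ℤ)}), hk⟩, by simp [hkne]⟩
    · rintro ⟨⟨i₁, j₁, F₁⟩, hF₁⟩ ⟨⟨i₂, j₂, F₂⟩, hF₂⟩ ⟨⟨i₃, j₃, F₃⟩, hF₃⟩ hc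
      have hF₁' : F₁ = ∅ ∨ F₁ = {(k : ℤ)} := hF₁
      have hF₂' : F₂ = ∅ ∨ F₂ = {(k : ℤ)} := hF₂
      have h3 := congrArg (fun x : ℤ × ℤ × Set ℤ => x.2.2) hc
      have h1 := congrArg (fun x : ℤ × ℤ × Set ℤ => x.1) hc
      have h2 := congrArg (fun x : ℤ × ℤ × Set ℤ => x.2.1) hc
      simp only [smul3] at h3 h1 h2
      rcases hF₁' with rfl | rfl <;> rcases hF₂' with rfl | rfl
      · have hF3 : F₃ = ∅ := by
          split_ifs at h3 <;> simp [zshift_empty] at h3 <;> exact h3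
        simp [hF3, mmul_none_left]
      · have hF3 : F₃ = ∅ := by
          split_ifs at h3 <;> simp [zshift_empty, zshift_singleton] at h3 <;> exact h3
        simp [hF3, hkne, mmul_none_left]
      · have hF3 : F₃ = ∅ := by
          split_ifs at h3 <;> simp [zshift_empty, zshift_singleton] at h3 <;> exact h3
        simp [hF3, hkne, mmul_none_right]
      · rcases lt_trichotomy j₁ i₂ with hlt | heq | hgt
        · have hF3 : F₃ = ∅ := by
            rw [if_pos hlt] at h3
            rw [zshift_singleton] at h3
            simp only at h3
            rw [h3]
            ext x
            simp only [Set.mem_inter_iff, Set.mem_singleton_iff, Set.mem_empty_iff_false,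
              iff_false, not_and]
            intro hx; omega
          show (if F₃ = ∅ then none else some (i₃, j₃)) =
            mmul (if ({(k : ℤ)} : Set ℤ) = ∅ then none else some (i₁, j₁))
              (if ({(k : ℤ)} : Set ℤ) = ∅ then none else some (i₂, j₂))
          rw [if_pos hF3, if_neg hkne, if_neg hkne, mmul_some, if_neg hlt.ne]
        · have hif : ¬ (j₁ < i₂) := by omega
          rw [if_neg hif, if_pos heq] at h3 h1 h2
          simp only [Set.inter_self] at h3 h1 h2
          show (if F₃ = ∅ then none else some (i₃, j₃)) =
            mmul (if ({(k : ℤ)} : Set ℤ) = ∅ then none else some (i₁, j₁))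
              (if ({(k : ℤ)} : Set ℤ) = ∅ then none else some (i₂, j₂))
          rw [h3, h1, h2, if_neg hkne, if_neg hkne, if_neg hkne, mmul_some, if_pos heq]
        · have hif : ¬ (j₁ < i₂) := by omega
          have hif2 : ¬ (j₁ = i₂) := by omega
          rw [if_neg hif, if_neg hif2] at h3
          have hF3 : F₃ = ∅ := by
            rw [zshift_singleton] at h3
            simp only at h3
            rw [h3]
            ext x
            simp only [Set.mem_inter_iff, Set.mem_singleton_iff, Set.mem_empty_iff_false,
              iff_false, not_and]
            intro hx; omega
          show (if F₃ = ∅ then none else some (i₃, j₃)) =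
            mmul (if ({(k : ℤ)} : Set ℤ) = ∅ then none else some (i₁, j₁))
              (if ({(k : ℤ)} : Set ℤ) = ∅ then none else some (i₂, j₂))
          rw [if_pos hF3, if_neg hkne, if_neg hkne, mmul_some, if_neg hif2]
    · rintro ⟨⟨i₁, j₁, F₁⟩, hF₁⟩ ⟨⟨i₂, j₂, F₂⟩, hF₂⟩
      have hF₁' : F₁ = ∅ ∨ F₁ = {(k : ℤ)} := hF₁
      have hF₂' : F₂ = ∅ ∨ F₂ = {(k : ℤ)} := hF₂
      rcases hF₁' with rfl | rfl <;> rcases hF₂' with rfl | rfl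
      · simp
      · simp [hkne, hkne', Subtype.mk.injEq, Prod.mk.injEq]
      · simp [hkne, hkne', Subtype.mk.injEq, Prod.mk.injEq]
      · show (if ({(k : ℤ)} : Set ℤ) = ∅ then none else some (i₁, j₁)) =
            (if ({(k : ℤ)} : Set ℤ) = ∅ then none else some (i₂, j₂)) ↔ _
        rw [if_neg hkne, if_neg hkne]
        simp only [Option.some_inj, Subtype.mk.injEq, Prod.mk.injEq, eq_self_iff_true,
          and_true, hkne, false_and, or_false]
end

section
/- Fix a positive integer j₀ and i₁, i₂ ∈ ℕ, and for i ∈ ℕ let 𝓕(i) = {∅, i + j₀ℕ} where i + j₀ℕ = {i + j₀·m : m ∈ ℕ}. Then each family 𝓕(i) is ω-closed, and there exists a multiplication-preserving bijection from S(𝓕(i₁)) onto S(𝓕(i₂)), namely the map sending (n, m, i₁ + j₀ℕ) to (n, m, i₂ + j₀ℕ) and (n, m, ∅) to (n, m, ∅); hence the semigroups S(𝓕(i₁)) and S(𝓕(i₂)) are isomorphic. -/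
/-- The arithmetic progression `i + j₀·ℕ` viewed as a subset of `ℤ`. -/
def arithSet (i j₀ : ℕ) : Set ℤ := {m : ℤ | ∃ l : ℕ, m = (i : ℤ) + (j₀ : ℤ) * l}

/-- The family `𝓕(i) = {∅, i + j₀·ℕ}`. -/
def arithFam (i j₀ : ℕ) : Set (Set ℤ) := {(∅ : Set ℤ), arithSet i j₀}

open Classical

/-- The map sending `(n, m, i₁ + j₀·ℕ)` to `(n, m, i₂ + j₀·ℕ)` and `(n, m, ∅)` to
`(n, m, ∅)`. -/
noncomputable def transferMap (i₂ j₀ : ℕ) (x : ℤ × ℤ × Set ℤ) : ℤ × ℤ × Set ℤ :=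
  (x.1, x.2.1, if x.2.2 = (∅ : Set ℤ) then (∅ : Set ℤ) else arithSet i₂ j₀)

lemma zshift_empty_s17 (c : ℤ) : zshift c (∅ : Set ℤ) = ∅ := by
  simp [zshift]

lemma arith_ne (i j₀ : ℕ) : arithSet i j₀ ≠ ∅ := by
  intro h
  have : (i : ℤ) ∈ arithSet i j₀ := ⟨0, by simp⟩
  rw [h] at this; exact this

lemma key (i j₀ : ℕ) (hj : 0 < j₀) (c : ℤ) (hc : c ≤ 0) :
    zshift c (arithSet i j₀) ∩ arithSet i j₀ =
      if (j₀ : ℤ) ∣ c then arithSet i j₀ else ∅ := by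
  ext m
  constructor
  · rintro ⟨⟨k, ⟨l₁, rfl⟩, rfl⟩, l₂, h2⟩
    have hd : (j₀ : ℤ) ∣ c := ⟨(l₂ : ℤ) - l₁, by linarith⟩
    rw [if_pos hd]
    exact ⟨l₂, h2⟩
  · intro hm
    split_ifs at hm with hd
    · obtain ⟨d, rfl⟩ := hd
      obtain ⟨l, rfl⟩ := hm
      have hd0 : d ≤ 0 := by
        by_contra h
        push_neg at h
        have hj' : (0:ℤ) < j₀ := by exact_mod_cast hj
        nlinarith
      refine ⟨⟨(i : ℤ) + (j₀:ℤ) * (l + (-d).toNat), ⟨l + (-d).toNat, by push_cast; ring⟩, ?_⟩,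
        ⟨l, rfl⟩⟩
      have : ((-d).toNat : ℤ) = -d := Int.toNat_of_nonneg (by linarith)
      push_cast [this]; ring
    · exact absurd hm (Set.notMem_empty m)

lemma key' (i j₀ : ℕ) (hj : 0 < j₀) (c : ℤ) (hc : c ≤ 0) :
    arithSet i j₀ ∩ zshift c (arithSet i j₀) =
      if (j₀ : ℤ) ∣ c then arithSet i j₀ else ∅ := by
  rw [Set.inter_comm]; exact key i j₀ hj c hc

lemma mem_arithFam {F : Set ℤ} {i j₀ : ℕ} :
    F ∈ arithFam i j₀ ↔ F = ∅ ∨ F = arithSet i j₀ := by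
  simp [arithFam]

/-- each family `𝓕(i) = {∅, i + j₀·ℕ}` is `ω`-closed, and for any
`i₁, i₂ ∈ ℕ` the indicated map is a multiplication-preserving bijection from
`S(𝓕(i₁))` onto `S(𝓕(i₂))`; hence these semigroups are isomorphic. -/
theorem stmt17 (j₀ : ℕ) (hj₀ : 0 < j₀) (i₁ i₂ : ℕ) :
    (∀ i : ℕ, OmegaClosed (arithFam i j₀)) ∧
    Set.BijOn (transferMap i₂ j₀) (Scar (arithFam i₁ j₀)) (Scar (arithFam i₂ j₀)) ∧
    (∀ x ∈ Scar (arithFam i₁ j₀), ∀ y ∈ Scar (arithFam i₁ j₀),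
      transferMap i₂ j₀ (smul3 x y) = smul3 (transferMap i₂ j₀ x) (transferMap i₂ j₀ y)) := by
  refine ⟨?_, ⟨?_, ?_, ?_⟩, ?_⟩
  · -- ω-closedness
    intro i
    constructor
    · intro F hF x hx
      rcases mem_arithFam.mp hF with rfl | rfl
      · exact absurd hx (Set.notMem_empty x)
      · obtain ⟨l, rfl⟩ := hx
        positivity
    · intro n F₁ h1 F₂ h2
      rcases mem_arithFam.mp h1 with rfl | rfl
      · exact mem_arithFam.mpr (Or.inl (by simp))
      rcases mem_arithFam.mp h2 with rfl | rfl
      · exact mem_arithFam.mpr (Or.inl (by simp [zshift_empty_s17]))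
      rw [key' i j₀ hj₀ (-(n:ℤ)) (by simp)]
      split_ifs
      · exact mem_arithFam.mpr (Or.inr rfl)
      · exact mem_arithFam.mpr (Or.inl rfl)
  · -- MapsTo
    intro x hx
    by_cases h : x.2.2 = ∅ <;>
      simp [Scar, transferMap, h, mem_arithFam]
  · -- InjOn
    rintro ⟨a, b, F⟩ hx ⟨c, d, G⟩ hy h
    simp only [Scar, Set.mem_setOf_eq, mem_arithFam] at hx hy
    simp only [transferMap, Prod.mk.injEq] at h
    obtain ⟨h1, h2, h3⟩ := h
    subst h1; subst h2
    rcases hx with rfl | rfl <;> rcases hy with rfl | rfl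
    · rfl
    · simp only [if_pos rfl, if_neg (arith_ne i₁ j₀)] at h3
      exact absurd h3.symm (arith_ne i₂ j₀)
    · simp only [if_pos rfl, if_neg (arith_ne i₁ j₀)] at h3
      exact absurd h3 (arith_ne i₂ j₀)
    · rfl
  · -- SurjOn
    rintro ⟨a, b, G⟩ hz
    simp only [Scar, Set.mem_setOf_eq, mem_arithFam] at hz
    rcases hz with rfl | rfl
    · exact ⟨(a, b, ∅), mem_arithFam.mpr (Or.inl rfl), by simp [transferMap]⟩
    · exact ⟨(a, b, arithSet i₁ j₀), mem_arithFam.mpr (Or.inr rfl),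
        by simp [transferMap, arith_ne i₁ j₀]⟩
  · -- multiplication preserving
    rintro ⟨a, b, F⟩ hx ⟨c, d, G⟩ hy
    simp only [Scar, Set.mem_setOf_eq, mem_arithFam] at hx hy
    rcases lt_trichotomy b c with h | h | h
    · rcases hx with rfl | rfl <;> rcases hy with rfl | rfl
      · simp [smul3, transferMap, h, zshift_empty_s17]
      · simp [smul3, transferMap, h, zshift_empty_s17, arith_ne i₁ j₀]
      · simp [smul3, transferMap, h, zshift_empty_s17, arith_ne i₁ j₀]
      · simp only [smul3, transferMap, if_pos h, if_neg (arith_ne i₁ j₀)]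
        rw [key i₁ j₀ hj₀ (b - c) (by linarith), key i₂ j₀ hj₀ (b - c) (by linarith)]
        by_cases hd : (j₀ : ℤ) ∣ (b - c) <;> simp [hd, arith_ne i₁ j₀]
    · subst h
      rcases hx with rfl | rfl <;> rcases hy with rfl | rfl
      · simp [smul3, transferMap]
      · simp [smul3, transferMap, arith_ne i₁ j₀]
      · simp [smul3, transferMap, arith_ne i₁ j₀]
      · simp [smul3, transferMap, arith_ne i₁ j₀, arith_ne i₂ j₀]
    · rcases hx with rfl | rfl <;> rcases hy with rfl | rfl
      · simp [smul3, transferMap, not_lt.mpr h.le, h.ne', zshift_empty_s17]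
      · simp [smul3, transferMap, not_lt.mpr h.le, h.ne', zshift_empty_s17, arith_ne i₁ j₀]
      · simp [smul3, transferMap, not_lt.mpr h.le, h.ne', zshift_empty_s17, arith_ne i₁ j₀]
      · simp only [smul3, transferMap, if_neg (not_lt.mpr h.le), if_neg h.ne',
          if_neg (arith_ne i₁ j₀)]
        rw [key' i₁ j₀ hj₀ (c - b) (by linarith), key' i₂ j₀ hj₀ (c - b) (by linarith)]
        by_cases hd : (j₀ : ℤ) ∣ (c - b) <;> simp [hd, arith_ne i₁ j₀]
end

section
/- Let 𝓕 be a nonempty ω-closed family of subsets of ℕ with ∅ ∉ 𝓕. Then: (a) for x = (i₁,j₁,F₁) and y = (i₂,j₂,F₂) in S(𝓕), there exists an idempotent e ∈ S(𝓕) with e·x = e·y if and only if i₁ − j₁ = i₂ − j₂ (this relation is the least group congruence σ on the inverse semigroup S(𝓕)); (b) the map S(𝓕) → ℤ sending (i,j,F) to i − j is a surjective homomorphism from (S(𝓕), ·) to the additive group (ℤ, +); consequently the quotient of S(𝓕) by σ is isomorphic to the additive group of integers. -/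
lemma smul3_hom (x y : ℤ × ℤ × Set ℤ) :
    (smul3 x y).1 - (smul3 x y).2.1 = (x.1 - x.2.1) + (y.1 - y.2.1) := by
  unfold smul3
  split_ifs with h1 h2 <;> simp <;> omega

/-- There is a member of `𝓕` contained in both shifted sets. -/
lemma key_ordered (𝓕 : Set (Set ℤ)) (h : OmegaClosed 𝓕) (n₁ n₂ : ℕ) (hle : n₁ ≤ n₂)
    (F₁ : Set ℤ) (hF₁ : F₁ ∈ 𝓕) (F₂ : Set ℤ) (hF₂ : F₂ ∈ 𝓕) :
    ∃ E ∈ 𝓕, E ⊆ zshift (-(n₁ : ℤ)) F₁ ∧ E ⊆ zshift (-(n₂ : ℤ)) F₂ := by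
  have hG : F₁ ∩ zshift (-((n₂ - n₁ : ℕ) : ℤ)) F₂ ∈ 𝓕 := h.2 (n₂ - n₁) F₁ hF₁ F₂ hF₂
  set G := F₁ ∩ zshift (-((n₂ - n₁ : ℕ) : ℤ)) F₂ with hGdef
  refine ⟨G ∩ zshift (-(n₁ : ℤ)) G, h.2 n₁ G hG G hG, ?_, ?_⟩
  · rintro x ⟨-, k, hk, rfl⟩
    exact ⟨k, hk.1, rfl⟩
  · rintro x ⟨-, k, hk, rfl⟩
    obtain ⟨j, hj, rfl⟩ := hk.2
    refine ⟨j, hj, ?_⟩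
    have : ((n₂ - n₁ : ℕ) : ℤ) = (n₂ : ℤ) - n₁ := by omega
    omega

lemma key_s18 (𝓕 : Set (Set ℤ)) (h : OmegaClosed 𝓕) (n₁ n₂ : ℕ)
    (F₁ : Set ℤ) (hF₁ : F₁ ∈ 𝓕) (F₂ : Set ℤ) (hF₂ : F₂ ∈ 𝓕) :
    ∃ E ∈ 𝓕, E ⊆ zshift (-(n₁ : ℤ)) F₁ ∧ E ⊆ zshift (-(n₂ : ℤ)) F₂ := by
  rcases le_total n₁ n₂ with hle | hle
  · exact key_ordered 𝓕 h n₁ n₂ hle F₁ hF₁ F₂ hF₂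
  · obtain ⟨E, hE, h1, h2⟩ := key_ordered 𝓕 h n₂ n₁ hle F₂ hF₂ F₁ hF₁
    exact ⟨E, hE, h2, h1⟩

/-- when `∅ ∉ 𝓕`, the least group congruence `σ` on `S(𝓕)` relates
`(i₁,j₁,F₁)` and `(i₂,j₂,F₂)` iff `i₁ − j₁ = i₂ − j₂`, and `(i,j,F) ↦ i − j` is a
surjective homomorphism onto the additive group `ℤ`; hence `S(𝓕)/σ ≅ ℤ(+)`. -/
theorem stmt18 (𝓕 : Set (Set ℤ)) (h : OmegaClosed 𝓕) (hne : 𝓕.Nonempty)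
    (hempty : (∅ : Set ℤ) ∉ 𝓕) :
    (∀ i₁ j₁ i₂ j₂ : ℤ, ∀ F₁ ∈ 𝓕, ∀ F₂ ∈ 𝓕,
      ((∃ e ∈ Scar 𝓕, smul3 e e = e ∧
        smul3 e (i₁, j₁, F₁) = smul3 e (i₂, j₂, F₂)) ↔ i₁ - j₁ = i₂ - j₂)) ∧
    (∀ x ∈ Scar 𝓕, ∀ y ∈ Scar 𝓕,
      (smul3 x y).1 - (smul3 x y).2.1 = (x.1 - x.2.1) + (y.1 - y.2.1)) ∧
    (∀ z : ℤ, ∃ x ∈ Scar 𝓕, x.1 - x.2.1 = z) := by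
  obtain ⟨F₀, hF₀⟩ := hne
  refine ⟨?_, fun x _ y _ => smul3_hom x y, fun z => ⟨(z, 0, F₀), hF₀, by simp⟩⟩
  intro i₁ j₁ i₂ j₂ F₁ hF₁ F₂ hF₂
  constructor
  · rintro ⟨e, -, -, heq⟩
    have h1 := smul3_hom e (i₁, j₁, F₁)
    have h2 := smul3_hom e (i₂, j₂, F₂)
    rw [heq] at h1
    simp only [h2] at h1
    omega
  · intro hij
    set m : ℤ := max i₁ i₂ + 1 with hm
    have hm₁ : i₁ < m := by omega
    have hm₂ : i₂ < m := by omega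
    obtain ⟨E, hE, hE₁, hE₂⟩ := key_s18 𝓕 h (m - i₁).toNat (m - i₂).toNat F₁ hF₁ F₂ hF₂
    have hn₁ : -(((m - i₁).toNat : ℤ)) = i₁ - m := by omega
    have hn₂ : -(((m - i₂).toNat : ℤ)) = i₂ - m := by omega
    rw [hn₁] at hE₁; rw [hn₂] at hE₂
    refine ⟨(m, m, E), hE, ?_, ?_⟩
    · unfold smul3
      simp
    · unfold smul3
      simp only
      rw [if_neg (by simpa using hm₁.not_gt), if_neg (by omega),
          if_neg (by simpa using hm₂.not_gt), if_neg (by omega)]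
      have e1 : E ∩ zshift (i₁ - m) F₁ = E := Set.inter_eq_left.mpr hE₁
      have e2 : E ∩ zshift (i₂ - m) F₂ = E := Set.inter_eq_left.mpr hE₂
      simp only [e1, e2]
      refine Prod.ext rfl (Prod.ext ?_ rfl)
      simp; omega
end
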